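/- arXiv:1710.05731 — 3 statements merged into one kernel-verified Lean document; each statement's English description precedes it below -/
import Mathlib

section
/- For all j ≥ 2 and odd n ≥ 3, every 3-uniform tree T on 2j+1 vertices satisfies R(T, K_n^{(3)}; 3) = j(n−1) + 1; for even n ≥ 4, j(n−2) + 2 ≤ R(T, K_n^{(3)}; 3) ≤ j(n−1). -/
/-- `IsTreeList r l` : the list of hyperedges `l` builds an `r`-uniform tree
hyperedge-by-hyperedge, each new hyperedge meeting the union of the previous
hyperedges in exactly one vertex. -/
inductive IsTreeList (r : ℕ) {V : Type*} [DecidableEq V] : List (Finset V) → Prop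
  | single (e : Finset V) (he : e.card = r) : IsTreeList r [e]
  | cons (e : Finset V) (l : List (Finset V)) (hl : IsTreeList r l) (he : e.card = r)
      (hint : (e ∩ l.foldr (· ∪ ·) ∅).card = 1) : IsTreeList r (e :: l)

namespace Stmt17

variable {V : Type*} [DecidableEq V]

/-- union of the edges of a list -/
def cover (l : List (Finset V)) : Finset V := l.foldr (· ∪ ·) ∅

@[simp] lemma cover_nil : cover ([] : List (Finset V)) = ∅ := rfl
@[simp] lemma cover_cons (e : Finset V) (l : List (Finset V)) :
    cover (e :: l) = e ∪ cover l := rfl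
@[simp] lemma cover_single (e : Finset V) : cover [e] = e := by simp [cover]

lemma edge_subset_cover {l : List (Finset V)} {e : Finset V} (he : e ∈ l) : e ⊆ cover l := by
  induction l with
  | nil => simp at he
  | cons f l ih =>
    rcases List.mem_cons.1 he with h | h
    · subst h; exact Finset.subset_union_left
    · exact (ih h).trans Finset.subset_union_right

lemma edge_card {r : ℕ} {l : List (Finset V)} (hl : IsTreeList r l) :
    ∀ e ∈ l, e.card = r := by
  induction hl with
  | single e he => intro f hf; simp at hf; subst hf; exact he
  | cons e l hl he hint ih =>
    intro f hf
    rcases List.mem_cons.1 hf with h | h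
    · subst h; exact he
    · exact ih f h

lemma cover_card {l : List (Finset V)} (hl : IsTreeList 3 l) :
    (cover l).card = 2 * l.length + 1 := by
  induction hl with
  | single e he => simpa using he
  | cons e l hl he hint ih =>
    have h := Finset.card_union_add_card_inter e (cover l)
    rw [show e ∩ cover l = e ∩ l.foldr (· ∪ ·) ∅ from rfl] at h
    rw [cover_cons]
    simp only [List.length_cons]
    omega

lemma treeList_tail {r : ℕ} {e : Finset V} {l : List (Finset V)} (hl : IsTreeList r (e :: l))
    (hne : l ≠ []) : IsTreeList r l := by
  cases hl with
  | single e he => exact absurd rfl hne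
  | cons e l hl he hint => exact hl

/-- the potential function for the two-edge-tree independent set lemma -/
def tau (m : ℕ) : ℕ := (m + 1) / 2 + (if m % 4 = 2 then 1 else 0)

lemma tau_le_self (m : ℕ) : tau m ≤ m := by
  simp only [tau]; split_ifs <;> omega

lemma tau_le_two_add {m : ℕ} (h : 3 ≤ m) : tau m ≤ 2 + tau (m - 3) := by
  simp only [tau]; split_ifs <;> omega

lemma tau_le_four {m : ℕ} (h : 4 ≤ m) : tau m ≤ 2 + tau (m - 4) := by
  simp only [tau]; split_ifs <;> omega

lemma tau_mono : Monotone tau := by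
  apply monotone_nat_of_le_succ
  intro m
  simp only [tau]; split_ifs <;> omega

lemma tau_le_sub {m s : ℕ} (h4 : 4 ≤ s) (hsm : s ≤ m) : tau m ≤ (s - 1) + tau (m - s) := by
  calc tau m ≤ 2 + tau (m - 4) := tau_le_four (le_trans h4 hsm)
    _ ≤ 2 + ((s - 4) + tau (m - s)) := by
        have : tau (m - 4) ≤ (s-4) + tau (m - s) := by
          have h1 : m - s ≤ m - 4 := by omega
          have h2 : m - 4 ≤ (m - s) + (s - 4) := by omega
          have := tau_mono h2
          have h3 : ∀ a b : ℕ, tau (a + b) ≤ tau a + b := by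
            intro a b
            induction b with
            | zero => simp
            | succ b ih =>
              have : tau (a + (b+1)) ≤ tau (a + b) + 1 := by
                simp only [tau]; split_ifs <;> omega
              omega
          have := h3 (m - s) (s - 4)
          omega
        omega
    _ ≤ (s - 1) + tau (m - s) := by omega

lemma tau_ge {n m : ℕ} (hn : 2 ≤ n) (h : 2 * (n - 1) + n % 2 ≤ m) : n ≤ tau m := by
  simp only [tau]; split_ifs <;> omega


variable {α : Type*} [DecidableEq α]

/-- In a family of red triples pairwise intersecting in 0 or 2 points, there is a large
set containing no red triple. -/
lemma fam (c : Finset α → Bool) : ∀ P : Finset α,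
    (∀ t₁ ⊆ P, ∀ t₂ ⊆ P, t₁.card = 3 → t₂.card = 3 → c t₁ = true → c t₂ = true →
      (t₁ ∩ t₂).card ≠ 1) →
    ∃ S ⊆ P, (∀ t ⊆ S, t.card = 3 → c t = false) ∧ tau P.card ≤ S.card := by
  intro P
  induction P using Finset.strongInduction with
  | _ P ih =>
  intro H
  -- basic fact about intersections of distinct red triples
  have inter_cases : ∀ t₁ ⊆ P, ∀ t₂ ⊆ P, t₁.card = 3 → t₂.card = 3 → c t₁ = true →
      c t₂ = true → t₁ ≠ t₂ → (t₁ ∩ t₂).card = 0 ∨ (t₁ ∩ t₂).card = 2 := by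
    intro t₁ h₁ t₂ h₂ hc₁ hc₂ hr₁ hr₂ hne
    have hH := H t₁ h₁ t₂ h₂ hc₁ hc₂ hr₁ hr₂
    have hle : (t₁ ∩ t₂).card ≤ 3 :=
      le_trans (Finset.card_le_card Finset.inter_subset_left) (le_of_eq hc₁)
    have h3 : (t₁ ∩ t₂).card ≠ 3 := by
      intro h3
      have he1 : t₁ ∩ t₂ = t₁ :=
        Finset.eq_of_subset_of_card_le Finset.inter_subset_left (by omega)
      have : t₁ ⊆ t₂ := by rw [← he1]; exact Finset.inter_subset_right
      exact hne (Finset.eq_of_subset_of_card_le this (by omega))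
    omega
  by_cases hred : ∃ e ⊆ P, e.card = 3 ∧ c e = true
  case neg =>
    refine ⟨P, subset_rfl, ?_, tau_le_self _⟩
    intro t ht h3
    by_contra hct
    exact hred ⟨t, ht, h3, by simpa using hct⟩
  case pos =>
  obtain ⟨e, heP, he3, hce⟩ := hred
  by_cases hA : ∀ t ⊆ P, t.card = 3 → c t = true → (t ∩ e).Nonempty → t = e
  case pos =>
    -- isolated triple: keep two of its vertices
    obtain ⟨x, y, z, hxy, hxz, hyz, hexyz⟩ := Finset.card_eq_three.1 he3
    have hsub : P \ e ⊂ P :=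
      Finset.sdiff_ssubset heP (by rw [hexyz]; exact ⟨x, by simp⟩)
    obtain ⟨S', hS'P, hS'ind, hS'card⟩ := ih (P \ e) hsub (by
      intro t₁ h₁ t₂ h₂ hc₁ hc₂ hr₁ hr₂
      exact H t₁ (h₁.trans (Finset.sdiff_subset)) t₂ (h₂.trans (Finset.sdiff_subset))
        hc₁ hc₂ hr₁ hr₂)
    have hxyP : ({x, y} : Finset α) ⊆ e := by
      rw [hexyz]; intro w hw; simp at hw; rcases hw with h | h <;> simp [h]
    refine ⟨{x, y} ∪ S', ?_, ?_, ?_⟩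
    · exact Finset.union_subset (hxyP.trans heP) (hS'P.trans Finset.sdiff_subset)
    · intro t ht h3
      by_contra hct
      have hct' : c t = true := by simpa using hct
      have htP : t ⊆ P :=
        ht.trans (Finset.union_subset (hxyP.trans heP) (hS'P.trans Finset.sdiff_subset))
      by_cases hte : (t ∩ e).Nonempty
      · have hteq := hA t htP h3 hct' hte
        have hzt : z ∈ t := by rw [hteq, hexyz]; simp
        have := ht hzt
        rcases Finset.mem_union.1 this with h | h
        · simp at h; rcases h with h | h
          · exact hxz h.symm
          · exact hyz h.symm
        · have := hS'P h
          rw [Finset.mem_sdiff] at this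
          exact this.2 (by rw [hexyz]; simp)
      · have htS' : t ⊆ S' := by
          intro w hw
          rcases Finset.mem_union.1 (ht hw) with h | h
          · exact absurd ⟨w, Finset.mem_inter.2 ⟨hw, hxyP h⟩⟩ hte
          · exact h
        exact absurd (hS'ind t htS' h3) (by simp [hct'])
    · have hdisj : Disjoint ({x, y} : Finset α) S' := by
        rw [Finset.disjoint_left]
        intro w hw hw'
        exact (Finset.mem_sdiff.1 (hS'P hw')).2 (hxyP hw)
      rw [Finset.card_union_of_disjoint hdisj, Finset.card_pair hxy]
      have h3P : 3 ≤ P.card := he3 ▸ Finset.card_le_card heP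
      have hPe : (P \ e).card = P.card - 3 := by rw [Finset.card_sdiff_of_subset heP, he3]
      have := tau_le_two_add h3P
      rw [hPe] at hS'card
      omega
  case neg =>
    push_neg at hA
    obtain ⟨f, hfP, hf3, hcf, hfe, hfne⟩ := hA
    set pr := e ∩ f with hpr_def
    have hpr2 : pr.card = 2 := by
      have := inter_cases e heP f hfP he3 hf3 hce hcf (fun h => hfne h.symm)
      have hne : (e ∩ f).Nonempty := by
        obtain ⟨w, hw⟩ := hfe
        exact ⟨w, by rw [Finset.mem_inter] at hw ⊢; exact ⟨hw.2, hw.1⟩⟩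
      rcases this with h | h
      · exact absurd (Finset.card_eq_zero.1 h) (Finset.nonempty_iff_ne_empty.1 hne)
      · exact h
    obtain ⟨x, y, hxy, hprxy⟩ := Finset.card_eq_two.1 hpr2
    have hprE : pr ⊆ e := Finset.inter_subset_left
    have hprF : pr ⊆ f := Finset.inter_subset_right
    have hprP : pr ⊆ P := hprE.trans heP
    obtain ⟨a, ha⟩ : ∃ a, e \ pr = {a} :=
      Finset.card_eq_one.1 (by rw [Finset.card_sdiff_of_subset hprE, he3, hpr2])
    obtain ⟨b, hb⟩ : ∃ b, f \ pr = {b} :=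
      Finset.card_eq_one.1 (by rw [Finset.card_sdiff_of_subset hprF, hf3, hpr2])
    have hae : a ∈ e := (Finset.mem_sdiff.1 (ha ▸ Finset.mem_singleton_self a)).1
    have hapr : a ∉ pr := (Finset.mem_sdiff.1 (ha ▸ Finset.mem_singleton_self a)).2
    have hbf : b ∈ f := (Finset.mem_sdiff.1 (hb ▸ Finset.mem_singleton_self b)).1
    have hbpr : b ∉ pr := (Finset.mem_sdiff.1 (hb ▸ Finset.mem_singleton_self b)).2
    have hea : e = insert a pr := by
      apply Finset.eq_of_subset_of_card_le
      · intro w hw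
        by_cases hwp : w ∈ pr
        · exact Finset.mem_insert_of_mem hwp
        · have : w ∈ e \ pr := Finset.mem_sdiff.2 ⟨hw, hwp⟩
          rw [ha, Finset.mem_singleton] at this
          exact this ▸ Finset.mem_insert_self a pr
      · rw [he3]; exact le_trans (Finset.card_insert_le _ _) (by rw [hpr2])
    have hfb : f = insert b pr := by
      apply Finset.eq_of_subset_of_card_le
      · intro w hw
        by_cases hwp : w ∈ pr
        · exact Finset.mem_insert_of_mem hwp
        · have : w ∈ f \ pr := Finset.mem_sdiff.2 ⟨hw, hwp⟩
          rw [hb, Finset.mem_singleton] at this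
          exact this ▸ Finset.mem_insert_self b pr
      · rw [hf3]; exact le_trans (Finset.card_insert_le _ _) (by rw [hpr2])
    have hab : a ≠ b := by
      intro h
      exact hfne (by rw [hfb, hea, h])
    set Q := e ∪ f with hQ_def
    have hQP : Q ⊆ P := Finset.union_subset heP hfP
    have hQ4 : Q.card = 4 := by
      have := Finset.card_union_add_card_inter e f
      rw [← hQ_def, he3, hf3, ← hpr_def, hpr2] at this
      omega
    have hprQ : pr ⊆ Q := hprE.trans Finset.subset_union_left
    by_cases hB1 : ∀ t ⊆ P, t.card = 3 → c t = true → (t ∩ Q).Nonempty → t ⊆ Q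
    case pos =>
      have hsub : P \ Q ⊂ P := Finset.sdiff_ssubset hQP ⟨a, Finset.mem_union_left _ hae⟩
      obtain ⟨S', hS'P, hS'ind, hS'card⟩ := ih (P \ Q) hsub (by
        intro t₁ h₁ t₂ h₂ hc₁ hc₂ hr₁ hr₂
        exact H t₁ (h₁.trans Finset.sdiff_subset) t₂ (h₂.trans Finset.sdiff_subset)
          hc₁ hc₂ hr₁ hr₂)
      refine ⟨pr ∪ S', Finset.union_subset hprP (hS'P.trans Finset.sdiff_subset), ?_, ?_⟩
      · intro t ht h3
        by_contra hct
        have hct' : c t = true := by simpa using hct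
        have htP : t ⊆ P :=
          ht.trans (Finset.union_subset hprP (hS'P.trans Finset.sdiff_subset))
        by_cases htQ : (t ∩ Q).Nonempty
        · have htQ' : t ⊆ Q := hB1 t htP h3 hct' htQ
          have : t ⊆ pr := by
            intro w hw
            rcases Finset.mem_union.1 (ht hw) with h | h
            · exact h
            · exact absurd (htQ' hw) (Finset.mem_sdiff.1 (hS'P h)).2
          have := Finset.card_le_card this
          rw [h3, hpr2] at this
          omega
        · have htS' : t ⊆ S' := by
            intro w hw
            rcases Finset.mem_union.1 (ht hw) with h | h
            · exact absurd ⟨w, Finset.mem_inter.2 ⟨hw, hprQ h⟩⟩ htQ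
            · exact h
          exact absurd (hS'ind t htS' h3) (by simp [hct'])
      · have hdisj : Disjoint pr S' := by
          rw [Finset.disjoint_left]
          intro w hw hw'
          exact (Finset.mem_sdiff.1 (hS'P hw')).2 (hprQ hw)
        rw [Finset.card_union_of_disjoint hdisj, hpr2]
        have h4P : 4 ≤ P.card := hQ4 ▸ Finset.card_le_card hQP
        have hPQ : (P \ Q).card = P.card - 4 := by rw [Finset.card_sdiff_of_subset hQP, hQ4]
        have := tau_le_four h4P
        rw [hPQ] at hS'card
        omega
    case neg =>
      push_neg at hB1
      obtain ⟨g, hgP, hg3, hcg, hgQne, hgQ⟩ := hB1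
      -- the shared pair is contained in g
      have key : ∀ x' y', pr = {x', y'} → x' ∉ g → False := by
        intro x' y' hpr' hx'g
        have hy'pr : y' ∈ pr := by rw [hpr']; simp
        have hx'pr : x' ∈ pr := by rw [hpr']; simp
        have hy'e : y' ∈ e := hprE hy'pr
        have hy'f : y' ∈ f := hprF hy'pr
        have hx'e : x' ∈ e := hprE hx'pr
        have hx'f : x' ∈ f := hprF hx'pr
        have hy'a : y' ≠ a := fun h => hapr (h ▸ hy'pr)
        have hy'b : y' ≠ b := fun h => hbpr (h ▸ hy'pr)
        have hge := inter_cases g hgP e heP hg3 he3 hcg hce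
          (fun h => hgQ (h ▸ Finset.subset_union_left))
        have hgf := inter_cases g hgP f hfP hg3 hf3 hcg hcf
          (fun h => hgQ (h ▸ Finset.subset_union_right))
        have hsub_e : g ∩ e ⊆ {y', a} := by
          intro w hw
          rw [Finset.mem_inter] at hw
          have : w ∈ insert a pr := hea ▸ hw.2
          rcases Finset.mem_insert.1 this with h | h
          · simp [h]
          · rw [hpr'] at h
            rcases Finset.mem_insert.1 h with h | h
            · exact absurd (h ▸ hw.1) hx'g
            · rw [Finset.mem_singleton] at h; simp [h]
        have hsub_f : g ∩ f ⊆ {y', b} := by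
          intro w hw
          rw [Finset.mem_inter] at hw
          have : w ∈ insert b pr := hfb ▸ hw.2
          rcases Finset.mem_insert.1 this with h | h
          · simp [h]
          · rw [hpr'] at h
            rcases Finset.mem_insert.1 h with h | h
            · exact absurd (h ▸ hw.1) hx'g
            · rw [Finset.mem_singleton] at h; simp [h]
        rcases hge with hge | hge
        · rcases hgf with hgf | hgf
          · -- both empty: contradicts nonempty g ∩ Q
            obtain ⟨w, hw⟩ := hgQne
            rw [Finset.mem_inter, Finset.mem_union] at hw
            rcases hw.2 with h | h
            · have : w ∈ g ∩ e := Finset.mem_inter.2 ⟨hw.1, h⟩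
              rw [Finset.card_eq_zero.1 hge] at this; simp at this
            · have : w ∈ g ∩ f := Finset.mem_inter.2 ⟨hw.1, h⟩
              rw [Finset.card_eq_zero.1 hgf] at this; simp at this
          · have : g ∩ f = {y', b} := by
              apply Finset.eq_of_subset_of_card_le hsub_f
              rw [hgf]
              exact le_trans (Finset.card_insert_le _ _) (by simp)
            have hy'g : y' ∈ g := (Finset.mem_inter.1 (this ▸ (by simp : y' ∈ ({y', b} : Finset α)))).1
            have : y' ∈ g ∩ e := Finset.mem_inter.2 ⟨hy'g, hy'e⟩
            rw [Finset.card_eq_zero.1 hge] at this; simp at this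
        · have hgeq : g ∩ e = {y', a} := by
            apply Finset.eq_of_subset_of_card_le hsub_e
            rw [hge]
            exact le_trans (Finset.card_insert_le _ _) (by simp)
          have hy'g : y' ∈ g := (Finset.mem_inter.1 (hgeq ▸ (by simp : y' ∈ ({y', a} : Finset α)))).1
          have hag : a ∈ g := (Finset.mem_inter.1 (hgeq ▸ (by simp [hy'a.symm ∘ Eq.symm] : a ∈ ({y', a} : Finset α)))).1
          have hgf2 : (g ∩ f).card = 2 := by
            rcases hgf with h | h
            · exfalso
              have : y' ∈ g ∩ f := Finset.mem_inter.2 ⟨hy'g, hy'f⟩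
              rw [Finset.card_eq_zero.1 h] at this; simp at this
            · exact h
          have hgfeq : g ∩ f = {y', b} := by
            apply Finset.eq_of_subset_of_card_le hsub_f
            rw [hgf2]
            exact le_trans (Finset.card_insert_le _ _) (by simp)
          have hbg : b ∈ g := (Finset.mem_inter.1 (hgfeq ▸ (by simp [hy'b.symm ∘ Eq.symm] : b ∈ ({y', b} : Finset α)))).1
          -- g = {y', a, b} ⊆ Q
          have hsubg : ({y', a, b} : Finset α) ⊆ g := by
            intro w hw
            rcases Finset.mem_insert.1 hw with h | h
            · exact h ▸ hy'g
            · rcases Finset.mem_insert.1 h with h | h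
              · exact h ▸ hag
              · rw [Finset.mem_singleton] at h; exact h ▸ hbg
          have hcard : g = {y', a, b} := by
            have h3' : ({y', a, b} : Finset α).card = 3 := by
              rw [Finset.card_insert_of_notMem (by simp [hy'a, hy'b]),
                  Finset.card_insert_of_notMem (by simp [hab]), Finset.card_singleton]
            exact (Finset.eq_of_subset_of_card_le hsubg (by rw [hg3, h3'])).symm
          apply hgQ
          rw [hcard]
          intro w hw
          rcases Finset.mem_insert.1 hw with h | h
          · exact h ▸ Finset.mem_union_left _ hy'e
          · rcases Finset.mem_insert.1 h with h | h
            · exact h ▸ Finset.mem_union_left _ hae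
            · rw [Finset.mem_singleton] at h; exact h ▸ Finset.mem_union_right _ hbf
      have hxg : x ∈ g := by
        by_contra hx
        exact key x y hprxy hx
      have hyg : y ∈ g := by
        by_contra hy
        exact key y x (by rw [hprxy]; exact Finset.pair_comm x y) hy
      have hprg : pr ⊆ g := by
        rw [hprxy]
        intro w hw
        rcases Finset.mem_insert.1 hw with h | h
        · exact h ▸ hxg
        · rw [Finset.mem_singleton] at h; exact h ▸ hyg
      -- g = insert w pr with w outside Q
      obtain ⟨w, hwdef⟩ : ∃ w, g \ pr = {w} :=
        Finset.card_eq_one.1 (by rw [Finset.card_sdiff_of_subset hprg, hg3, hpr2])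
      have hwg : w ∈ g := (Finset.mem_sdiff.1 (hwdef ▸ Finset.mem_singleton_self w)).1
      have hwpr : w ∉ pr := (Finset.mem_sdiff.1 (hwdef ▸ Finset.mem_singleton_self w)).2
      have hgins : g = insert w pr := by
        apply Finset.eq_of_subset_of_card_le
        · intro q hq
          by_cases hqp : q ∈ pr
          · exact Finset.mem_insert_of_mem hqp
          · have : q ∈ g \ pr := Finset.mem_sdiff.2 ⟨hq, hqp⟩
            rw [hwdef, Finset.mem_singleton] at this
            exact this ▸ Finset.mem_insert_self w pr
        · rw [hg3]; exact le_trans (Finset.card_insert_le _ _) (by rw [hpr2])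
      have hwQ : w ∉ Q := fun hwQ => hgQ (by rw [hgins]; exact Finset.insert_subset hwQ hprQ)
      -- the set of petals
      set Z := P.filter (fun z => z ∉ pr ∧ c (insert z pr) = true) with hZ_def
      have hZmem : ∀ z, z ∈ Z ↔ z ∈ P ∧ z ∉ pr ∧ c (insert z pr) = true := by
        intro z; rw [hZ_def, Finset.mem_filter]
      have hpet3 : ∀ z, z ∉ pr → (insert z pr).card = 3 := by
        intro z hz; rw [Finset.card_insert_of_notMem hz, hpr2]
      have haZ : a ∈ Z := (hZmem a).2 ⟨heP hae, hapr, by rw [← hea]; exact hce⟩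
      have hbZ : b ∈ Z := (hZmem b).2 ⟨hfP hbf, hbpr, by rw [← hfb]; exact hcf⟩
      have hwZ : w ∈ Z := (hZmem w).2 ⟨hgP hwg, hwpr, by rw [← hgins]; exact hcg⟩
      have hwa : w ≠ a := fun h => hwQ (h ▸ Finset.mem_union_left _ hae)
      have hwb : w ≠ b := fun h => hwQ (h ▸ Finset.mem_union_right _ hbf)
      have hZ3 : 3 ≤ Z.card := by
        have hsub : ({a, b, w} : Finset α) ⊆ Z := by
          intro q hq
          rcases Finset.mem_insert.1 hq with h | h
          · exact h ▸ haZ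
          · rcases Finset.mem_insert.1 h with h | h
            · exact h ▸ hbZ
            · rw [Finset.mem_singleton] at h; exact h ▸ hwZ
        have h3 : ({a, b, w} : Finset α).card = 3 := by
          rw [Finset.card_insert_of_notMem (by simp [hab, hwa.symm]),
              Finset.card_insert_of_notMem (by simp [hwb.symm]), Finset.card_singleton]
        rw [← h3]; exact Finset.card_le_card hsub
      set W := pr ∪ Z with hW_def
      have hWP : W ⊆ P := Finset.union_subset hprP (Finset.filter_subset _ _)
      have hdisjprZ : Disjoint pr Z := by
        rw [Finset.disjoint_left]
        intro q hq hq'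
        exact ((hZmem q).1 hq').2.1 hq
      have hWcard : W.card = Z.card + 2 := by
        rw [hW_def, Finset.card_union_of_disjoint hdisjprZ, hpr2]; omega
      have hxpr : x ∈ pr := by rw [hprxy]; simp
      have hypr : y ∈ pr := by rw [hprxy]; simp
      -- step 1 : a red triple through a petal contains the core pair
      have step1 : ∀ t, t ⊆ P → t.card = 3 → c t = true → ∀ z ∈ Z, z ∈ t → pr ⊆ t := by
        intro t htP ht3 hct z hzZ hzt
        by_contra hprt
        obtain ⟨hzP, hzpr, hcz⟩ := (hZmem z).1 hzZ
        have hezP : insert z pr ⊆ P := Finset.insert_subset hzP hprP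
        have hez3 : (insert z pr).card = 3 := hpet3 z hzpr
        have htez : t ≠ insert z pr := fun h => hprt (by rw [h]; exact Finset.subset_insert _ _)
        have h02 := inter_cases t htP (insert z pr) hezP ht3 hez3 hct hcz htez
        have hz_in : z ∈ t ∩ insert z pr :=
          Finset.mem_inter.2 ⟨hzt, Finset.mem_insert_self _ _⟩
        have hc2 : (t ∩ insert z pr).card = 2 := by
          rcases h02 with h | h
          · exfalso; rw [Finset.card_eq_zero.1 h] at hz_in; simp at hz_in
          · exact h
        obtain ⟨u, hu⟩ : ∃ u, (t ∩ insert z pr).erase z = {u} :=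
          Finset.card_eq_one.1 (by rw [Finset.card_erase_of_mem hz_in, hc2])
        have hu_mem : u ∈ (t ∩ insert z pr).erase z := hu ▸ Finset.mem_singleton_self u
        have huz : u ≠ z := (Finset.mem_erase.1 hu_mem).1
        have hut : u ∈ t := (Finset.mem_inter.1 (Finset.mem_erase.1 hu_mem).2).1
        have huez : u ∈ insert z pr := (Finset.mem_inter.1 (Finset.mem_erase.1 hu_mem).2).2
        have hupr : u ∈ pr := by
          rcases Finset.mem_insert.1 huez with h | h
          · exact absurd h huz
          · exact h
        have htzu : ({z, u} : Finset α) ⊆ t :=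
          Finset.insert_subset hzt (Finset.singleton_subset_iff.2 hut)
        obtain ⟨v', hv'⟩ : ∃ v', t \ {z, u} = {v'} :=
          Finset.card_eq_one.1
            (by rw [Finset.card_sdiff_of_subset htzu, ht3, Finset.card_pair (Ne.symm huz)])
        have hv't : v' ∈ t := (Finset.mem_sdiff.1 (hv' ▸ Finset.mem_singleton_self v')).1
        have hv'zu : v' ∉ ({z, u} : Finset α) :=
          (Finset.mem_sdiff.1 (hv' ▸ Finset.mem_singleton_self v')).2
        have htmem : ∀ q ∈ t, q = z ∨ q = u ∨ q = v' := by
          intro q hq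
          by_cases h : q ∈ ({z, u} : Finset α)
          · rcases Finset.mem_insert.1 h with h | h
            · exact Or.inl h
            · rw [Finset.mem_singleton] at h; exact Or.inr (Or.inl h)
          · have : q ∈ t \ {z, u} := Finset.mem_sdiff.2 ⟨hq, h⟩
            rw [hv', Finset.mem_singleton] at this
            exact Or.inr (Or.inr this)
        have hv'ez : v' ∉ insert z pr := by
          intro hmem
          have hv'in : v' ∈ t ∩ insert z pr := Finset.mem_inter.2 ⟨hv't, hmem⟩
          have hsub2 : ({z, u} : Finset α) ⊆ t ∩ insert z pr :=
            Finset.insert_subset hz_in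
              (Finset.singleton_subset_iff.2 (Finset.mem_inter.2 ⟨hut, huez⟩))
          have heq2 : t ∩ insert z pr = {z, u} :=
            (Finset.eq_of_subset_of_card_le hsub2
              (by rw [hc2, Finset.card_pair (Ne.symm huz)])).symm
          rw [heq2] at hv'in
          exact hv'zu hv'in
        have hZcd : 1 ≤ (Z \ {z, v'}).card := by
          have h1 := Finset.le_card_sdiff ({z, v'} : Finset α) Z
          have h2 : ({z, v'} : Finset α).card ≤ 2 :=
            le_trans (Finset.card_insert_le _ _) (by simp)
          omega
        obtain ⟨z', hz'⟩ := Finset.card_pos.1 (by omega : 0 < (Z \ {z, v'}).card)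
        have hz'Z : z' ∈ Z := (Finset.mem_sdiff.1 hz').1
        have hz'nzv : z' ∉ ({z, v'} : Finset α) := (Finset.mem_sdiff.1 hz').2
        have hz'z : z' ≠ z := fun h => hz'nzv (by simp [h])
        have hz'v : z' ≠ v' := fun h => hz'nzv (by simp [h])
        obtain ⟨hz'P, hz'pr, hcz'⟩ := (hZmem z').1 hz'Z
        have h1 : t ∩ insert z' pr = {u} := by
          apply Finset.Subset.antisymm
          · intro q hq
            rw [Finset.mem_inter] at hq
            rcases htmem q hq.1 with h | h | h
            · exfalso
              subst h
              rcases Finset.mem_insert.1 hq.2 with h | h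
              · exact hz'z h.symm
              · exact hzpr h
            · simp [h]
            · exfalso
              subst h
              rcases Finset.mem_insert.1 hq.2 with h | h
              · exact hz'v h.symm
              · exact hv'ez (Finset.mem_insert_of_mem h)
          · exact Finset.singleton_subset_iff.2
              (Finset.mem_inter.2 ⟨hut, Finset.mem_insert_of_mem hupr⟩)
        have hcard1 : (t ∩ insert z' pr).card = 1 := by rw [h1]; simp
        exact H t htP (insert z' pr) (Finset.insert_subset hz'P hprP) ht3
          (hpet3 z' hz'pr) hct hcz' hcard1
      -- step 2 : a red triple meeting W contains the core pair
      have step2 : ∀ t, t ⊆ P → t.card = 3 → c t = true → (t ∩ W).Nonempty → pr ⊆ t := by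
        have keyPr : ∀ t, t ⊆ P → t.card = 3 → c t = true →
            ∀ x' y', pr = {x', y'} → x' ∈ t → pr ⊆ t := by
          intro t htP ht3 hct x' y' hpr' hx't
          by_contra hprt
          have hx'pr : x' ∈ pr := by rw [hpr']; simp
          have hx'y' : x' ≠ y' := by
            intro h; rw [hpr', ← h] at hpr2; simp at hpr2
          obtain ⟨u, v', huv, herase⟩ :=
            Finset.card_eq_two.1 (by rw [Finset.card_erase_of_mem hx't, ht3] :
              (t.erase x').card = 2)
          have hut : u ∈ t := Finset.mem_of_mem_erase (herase ▸ (by simp : u ∈ ({u, v'} : Finset α)))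
          have hv't : v' ∈ t := Finset.mem_of_mem_erase (herase ▸ (by simp : v' ∈ ({u, v'} : Finset α)))
          have htmem : ∀ q ∈ t, q = x' ∨ q = u ∨ q = v' := by
            intro q hq
            by_cases h : q = x'
            · exact Or.inl h
            · have : q ∈ t.erase x' := Finset.mem_erase.2 ⟨h, hq⟩
              rw [herase] at this
              rcases Finset.mem_insert.1 this with h | h
              · exact Or.inr (Or.inl h)
              · rw [Finset.mem_singleton] at h; exact Or.inr (Or.inr h)
          have hy'nt : y' ∉ t := fun h =>
            hprt (by rw [hpr']; exact Finset.insert_subset hx't (Finset.singleton_subset_iff.2 h))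
          have hZcd : 1 ≤ (Z \ {u, v'}).card := by
            have h1 := Finset.le_card_sdiff ({u, v'} : Finset α) Z
            have h2 : ({u, v'} : Finset α).card ≤ 2 :=
              le_trans (Finset.card_insert_le _ _) (by simp)
            omega
          obtain ⟨z', hz'⟩ := Finset.card_pos.1 (by omega : 0 < (Z \ {u, v'}).card)
          have hz'Z : z' ∈ Z := (Finset.mem_sdiff.1 hz').1
          have hz'nuv : z' ∉ ({u, v'} : Finset α) := (Finset.mem_sdiff.1 hz').2
          have hz'u : z' ≠ u := fun h => hz'nuv (by simp [h])
          have hz'v : z' ≠ v' := fun h => hz'nuv (by simp [h])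
          obtain ⟨hz'P, hz'pr, hcz'⟩ := (hZmem z').1 hz'Z
          have hz'x' : z' ≠ x' := fun h => hz'pr (h ▸ hx'pr)
          have htez : t ≠ insert z' pr := fun h =>
            hprt (by rw [h]; exact Finset.subset_insert _ _)
          have h02 := inter_cases t htP (insert z' pr)
            (Finset.insert_subset hz'P hprP) ht3 (hpet3 z' hz'pr) hct hcz' htez
          have hx'in : x' ∈ t ∩ insert z' pr :=
            Finset.mem_inter.2 ⟨hx't, Finset.mem_insert_of_mem hx'pr⟩
          have hc2 : (t ∩ insert z' pr).card = 2 := by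
            rcases h02 with h | h
            · exfalso; rw [Finset.card_eq_zero.1 h] at hx'in; simp at hx'in
            · exact h
          obtain ⟨u₂, hu₂⟩ : ∃ u₂, (t ∩ insert z' pr).erase x' = {u₂} :=
            Finset.card_eq_one.1 (by rw [Finset.card_erase_of_mem hx'in, hc2])
          have hu₂mem : u₂ ∈ (t ∩ insert z' pr).erase x' := hu₂ ▸ Finset.mem_singleton_self u₂
          have hu₂x' : u₂ ≠ x' := (Finset.mem_erase.1 hu₂mem).1
          have hu₂t : u₂ ∈ t := (Finset.mem_inter.1 (Finset.mem_erase.1 hu₂mem).2).1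
          have hu₂ez : u₂ ∈ insert z' pr := (Finset.mem_inter.1 (Finset.mem_erase.1 hu₂mem).2).2
          rcases Finset.mem_insert.1 hu₂ez with h | h
          · -- u₂ = z' : impossible since z' avoids t
            subst h
            rcases htmem u₂ hu₂t with h | h | h
            · exact hz'x' h
            · exact hz'u h
            · exact hz'v h
          · -- u₂ ∈ pr, u₂ ≠ x', so u₂ = y' ∈ t : contradiction
            rw [hpr'] at h
            rcases Finset.mem_insert.1 h with h | h
            · exact hu₂x' h
            · rw [Finset.mem_singleton] at h
              exact hy'nt (h ▸ hu₂t)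
        intro t htP ht3 hct hne
        obtain ⟨w₀, hw₀⟩ := hne
        rw [Finset.mem_inter] at hw₀
        rcases Finset.mem_union.1 hw₀.2 with h | h
        · have : w₀ = x ∨ w₀ = y := by rw [hprxy] at h; simpa using h
          rcases this with h' | h'
          · exact keyPr t htP ht3 hct x y hprxy (h' ▸ hw₀.1)
          · exact keyPr t htP ht3 hct y x (by rw [hprxy]; exact Finset.pair_comm x y)
              (h' ▸ hw₀.1)
        · exact step1 t htP ht3 hct w₀ h hw₀.1
      -- step 3 : a red triple meeting W is inside W
      have step3 : ∀ t, t ⊆ P → t.card = 3 → c t = true → (t ∩ W).Nonempty → t ⊆ W := by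
        intro t htP ht3 hct hne
        have hprt := step2 t htP ht3 hct hne
        obtain ⟨u, hu⟩ : ∃ u, t \ pr = {u} :=
          Finset.card_eq_one.1 (by rw [Finset.card_sdiff_of_subset hprt, ht3, hpr2])
        have hut : u ∈ t := (Finset.mem_sdiff.1 (hu ▸ Finset.mem_singleton_self u)).1
        have hupr : u ∉ pr := (Finset.mem_sdiff.1 (hu ▸ Finset.mem_singleton_self u)).2
        have hteq : t = insert u pr := by
          apply Finset.eq_of_subset_of_card_le
          · intro q hq
            by_cases hqp : q ∈ pr
            · exact Finset.mem_insert_of_mem hqp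
            · have : q ∈ t \ pr := Finset.mem_sdiff.2 ⟨hq, hqp⟩
              rw [hu, Finset.mem_singleton] at this
              exact this ▸ Finset.mem_insert_self u pr
          · rw [ht3]; exact le_trans (Finset.card_insert_le _ _) (by rw [hpr2])
        have huZ : u ∈ Z := (hZmem u).2 ⟨htP hut, hupr, by rw [← hteq]; exact hct⟩
        rw [hteq]
        exact Finset.insert_subset (Finset.mem_union_right _ huZ)
          (Finset.subset_union_left)
      -- recurse on P \ W
      have hsub : P \ W ⊂ P :=
        Finset.sdiff_ssubset hWP ⟨x, Finset.mem_union_left _ hxpr⟩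
      obtain ⟨S', hS'P, hS'ind, hS'card⟩ := ih (P \ W) hsub (by
        intro t₁ h₁ t₂ h₂ hc₁ hc₂ hr₁ hr₂
        exact H t₁ (h₁.trans Finset.sdiff_subset) t₂ (h₂.trans Finset.sdiff_subset)
          hc₁ hc₂ hr₁ hr₂)
      have hxZ : x ∉ Z := fun h => ((hZmem x).1 h).2.1 hxpr
      have hxZW : insert x Z ⊆ W := Finset.insert_subset (Finset.mem_union_left _ hxpr)
        Finset.subset_union_right
      refine ⟨insert x Z ∪ S', ?_, ?_, ?_⟩
      · exact Finset.union_subset (hxZW.trans hWP) (hS'P.trans Finset.sdiff_subset)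
      · intro t ht h3
        by_contra hct
        have hct' : c t = true := by simpa using hct
        have htP : t ⊆ P :=
          ht.trans (Finset.union_subset (hxZW.trans hWP) (hS'P.trans Finset.sdiff_subset))
        by_cases htW : (t ∩ W).Nonempty
        · have hprt := step2 t htP h3 hct' htW
          have hyt : y ∈ t := hprt hypr
          rcases Finset.mem_union.1 (ht hyt) with h | h
          · rcases Finset.mem_insert.1 h with h | h
            · exact hxy h.symm
            · exact ((hZmem y).1 h).2.1 hypr
          · exact (Finset.mem_sdiff.1 (hS'P h)).2 (Finset.mem_union_left _ hypr)
        · have htS' : t ⊆ S' := by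
            intro q hq
            rcases Finset.mem_union.1 (ht hq) with h | h
            · exact absurd ⟨q, Finset.mem_inter.2 ⟨hq, hxZW h⟩⟩ htW
            · exact h
          exact absurd (hS'ind t htS' h3) (by simp [hct'])
      · have hdisj : Disjoint (insert x Z) S' := by
          rw [Finset.disjoint_left]
          intro q hq hq'
          exact (Finset.mem_sdiff.1 (hS'P hq')).2 (hxZW hq)
        rw [Finset.card_union_of_disjoint hdisj, Finset.card_insert_of_notMem hxZ]
        have hWle : W.card ≤ P.card := Finset.card_le_card hWP
        have hPW : (P \ W).card = P.card - W.card := Finset.card_sdiff_of_subset hWP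
        have htau := tau_le_sub (by omega : 4 ≤ W.card) hWle
        rw [hPW] at hS'card
        omega



section Emb
variable {V : Type*} [DecidableEq V] {p : ℕ}

lemma exists_extend (c : Finset (Fin p) → Bool) (P : Finset (Fin p))
    (l : List (Finset V)) (f : V → Fin p)
    (hinj : Set.InjOn f ↑(cover l)) (hmem : ∀ w ∈ cover l, f w ∈ P)
    (hred : ∀ d ∈ l, c (d.image f) = true)
    (e : Finset V) (he3 : e.card = 3) (v : V) (hv : e ∩ cover l = {v})
    (x y : Fin p) (hxy : x ≠ y) (hxP : x ∈ P) (hyP : y ∈ P)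
    (hx : ∀ w ∈ cover l, f w ≠ x) (hy : ∀ w ∈ cover l, f w ≠ y)
    (hcred : c (insert (f v) {x, y}) = true) :
    ∃ f' : V → Fin p, Set.InjOn f' ↑(cover (e :: l)) ∧ (∀ w ∈ cover (e :: l), f' w ∈ P) ∧
      ∀ d ∈ e :: l, c (d.image f') = true := by
  have hvmem : v ∈ e ∩ cover l := hv ▸ Finset.mem_singleton_self v
  have hve : v ∈ e := (Finset.mem_inter.1 hvmem).1
  have hvcov : v ∈ cover l := (Finset.mem_inter.1 hvmem).2
  have hsd2 : (e \ cover l).card = 2 := by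
    have h1 := Finset.card_inter_add_card_sdiff e (cover l)
    rw [hv] at h1
    simp only [Finset.card_singleton] at h1
    omega
  obtain ⟨a, b, hab, habeq⟩ := Finset.card_eq_two.1 hsd2
  have ha : a ∈ e \ cover l := habeq ▸ (by simp : a ∈ ({a, b} : Finset V))
  have hb : b ∈ e \ cover l := habeq ▸ (by simp : b ∈ ({a, b} : Finset V))
  have hae : a ∈ e := (Finset.mem_sdiff.1 ha).1
  have hanc : a ∉ cover l := (Finset.mem_sdiff.1 ha).2
  have hbe : b ∈ e := (Finset.mem_sdiff.1 hb).1
  have hbnc : b ∉ cover l := (Finset.mem_sdiff.1 hb).2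
  have hva : v ≠ a := fun h => hanc (h ▸ hvcov)
  have hvb : v ≠ b := fun h => hbnc (h ▸ hvcov)
  have hemem : ∀ q ∈ e, q = v ∨ q = a ∨ q = b := by
    intro q hq
    by_cases h : q ∈ cover l
    · have : q ∈ e ∩ cover l := Finset.mem_inter.2 ⟨hq, h⟩
      rw [hv, Finset.mem_singleton] at this
      exact Or.inl this
    · have : q ∈ e \ cover l := Finset.mem_sdiff.2 ⟨hq, h⟩
      rw [habeq] at this
      rcases Finset.mem_insert.1 this with h' | h'
      · exact Or.inr (Or.inl h')
      · rw [Finset.mem_singleton] at h'; exact Or.inr (Or.inr h')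
  have he_eq : e = {v, a, b} := by
    apply Finset.Subset.antisymm
    · intro q hq
      rcases hemem q hq with h | h | h <;> simp [h]
    · intro q hq
      rcases Finset.mem_insert.1 hq with h | h
      · exact h ▸ hve
      · rcases Finset.mem_insert.1 h with h' | h'
        · exact h' ▸ hae
        · rw [Finset.mem_singleton] at h'; exact h' ▸ hbe
  classical
  set f' : V → Fin p := fun w => if w = a then x else if w = b then y else f w with hf'_def
  have hf'a : f' a = x := by simp [hf'_def]
  have hf'b : f' b = y := by simp [hf'_def, hab.symm]
  have hf'cov : ∀ w ∈ cover l, f' w = f w := by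
    intro w hw
    have hwa : w ≠ a := fun h => hanc (h ▸ hw)
    have hwb : w ≠ b := fun h => hbnc (h ▸ hw)
    simp [hf'_def, hwa, hwb]
  have hf'v : f' v = f v := hf'cov v hvcov
  have hmem' : ∀ w ∈ cover (e :: l), f' w ∈ P := by
    intro w hw
    rcases Finset.mem_union.1 (by simpa using hw) with h | h
    · rcases hemem w h with h' | h' | h'
      · rw [h', hf'v]; exact hmem v hvcov
      · rw [h', hf'a]; exact hxP
      · rw [h', hf'b]; exact hyP
    · rw [hf'cov w h]; exact hmem w h
  refine ⟨f', ?_, hmem', ?_⟩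
  · -- injectivity
    intro u hu w hw huw
    simp only [cover_cons, Finset.coe_union, Set.mem_union, Finset.mem_coe] at hu hw
    have hukey : u ∈ cover l ∨ u = a ∨ u = b := by
      rcases hu with h | h
      · rcases hemem u h with h' | h' | h'
        · exact Or.inl (h' ▸ hvcov)
        · exact Or.inr (Or.inl h')
        · exact Or.inr (Or.inr h')
      · exact Or.inl h
    have hwkey : w ∈ cover l ∨ w = a ∨ w = b := by
      rcases hw with h | h
      · rcases hemem w h with h' | h' | h'
        · exact Or.inl (h' ▸ hvcov)
        · exact Or.inr (Or.inl h')
        · exact Or.inr (Or.inr h')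
      · exact Or.inl h
    rcases hukey with hu' | hu' | hu' <;> rcases hwkey with hw' | hw' | hw'
    · exact hinj (by exact_mod_cast hu') (by exact_mod_cast hw')
        (by rw [hf'cov u hu', hf'cov w hw'] at huw; exact huw)
    · exact absurd (by rw [hf'cov u hu', hw', hf'a] at huw; exact huw) (hx u hu')
    · exact absurd (by rw [hf'cov u hu', hw', hf'b] at huw; exact huw) (hy u hu')
    · exact absurd (by rw [hf'cov w hw', hu', hf'a] at huw; exact huw.symm) (hx w hw')
    · rw [hu', hw']
    · exfalso; rw [hu', hw', hf'a, hf'b] at huw; exact hxy huw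
    · exact absurd (by rw [hf'cov w hw', hu', hf'b] at huw; exact huw.symm) (hy w hw')
    · exfalso; rw [hu', hw', hf'a, hf'b] at huw; exact hxy huw.symm
    · rw [hu', hw']
  · -- redness
    intro d hd
    rcases List.mem_cons.1 hd with h | h
    · subst h
      have himg : d.image f' = insert (f v) {x, y} := by
        rw [he_eq]
        rw [Finset.image_insert, Finset.image_insert, Finset.image_singleton]
        rw [hf'v, hf'a, hf'b]
      rw [himg]; exact hcred
    · have hdc : d ⊆ cover l := edge_subset_cover h
      have himg : d.image f' = d.image f :=
        Finset.image_congr (fun w hw => hf'cov w (hdc hw))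
      rw [himg]; exact hred d h

lemma single_embed (c : Finset (Fin p) → Bool) (P : Finset (Fin p))
    (e : Finset V) (he3 : e.card = 3) (v : V) (hv : v ∈ e)
    (E : Finset (Fin p)) (hEP : E ⊆ P) (hE3 : E.card = 3)
    (V₀ : Fin p) (hV₀ : V₀ ∈ E) (hcE : c E = true) :
    ∃ f : V → Fin p, Set.InjOn f ↑(cover [e]) ∧ (∀ w ∈ cover [e], f w ∈ P) ∧
      f v = V₀ ∧ (∀ w ∈ cover [e], f w ∈ E) ∧ ∀ d ∈ [e], c (d.image f) = true := by
  classical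
  have hcov : cover [e] = e := by simp [cover]
  obtain ⟨s, t, hst, hsteq⟩ :=
    Finset.card_eq_two.1 (by rw [Finset.card_erase_of_mem hv, he3] : (e.erase v).card = 2)
  obtain ⟨S, T, hST, hSTeq⟩ :=
    Finset.card_eq_two.1 (by rw [Finset.card_erase_of_mem hV₀, hE3] : (E.erase V₀).card = 2)
  have hse : s ∈ e := Finset.mem_of_mem_erase (hsteq ▸ (by simp : s ∈ ({s, t} : Finset V)))
  have hte : t ∈ e := Finset.mem_of_mem_erase (hsteq ▸ (by simp : t ∈ ({s, t} : Finset V)))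
  have hsv : s ≠ v := (Finset.mem_erase.1 (hsteq ▸ (by simp : s ∈ ({s, t} : Finset V)))).1
  have htv : t ≠ v := (Finset.mem_erase.1 (hsteq ▸ (by simp : t ∈ ({s, t} : Finset V)))).1
  have hSE : S ∈ E := Finset.mem_of_mem_erase (hSTeq ▸ (by simp : S ∈ ({S, T} : Finset (Fin p))))
  have hTE : T ∈ E := Finset.mem_of_mem_erase (hSTeq ▸ (by simp : T ∈ ({S, T} : Finset (Fin p))))
  have hSV : S ≠ V₀ := (Finset.mem_erase.1 (hSTeq ▸ (by simp : S ∈ ({S, T} : Finset (Fin p))))).1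
  have hTV : T ≠ V₀ := (Finset.mem_erase.1 (hSTeq ▸ (by simp : T ∈ ({S, T} : Finset (Fin p))))).1
  have hemem : ∀ q ∈ e, q = v ∨ q = s ∨ q = t := by
    intro q hq
    by_cases h : q = v
    · exact Or.inl h
    · have : q ∈ e.erase v := Finset.mem_erase.2 ⟨h, hq⟩
      rw [hsteq] at this
      rcases Finset.mem_insert.1 this with h' | h'
      · exact Or.inr (Or.inl h')
      · rw [Finset.mem_singleton] at h'; exact Or.inr (Or.inr h')
  have he_eq : e = {v, s, t} := by
    apply Finset.Subset.antisymm
    · intro q hq; rcases hemem q hq with h | h | h <;> simp [h]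
    · intro q hq
      rcases Finset.mem_insert.1 hq with h | h
      · exact h ▸ hv
      · rcases Finset.mem_insert.1 h with h' | h'
        · exact h' ▸ hse
        · rw [Finset.mem_singleton] at h'; exact h' ▸ hte
  have hE_eq : E = {V₀, S, T} := by
    rw [show ({V₀, S, T} : Finset (Fin p)) = insert V₀ {S, T} from rfl, ← hSTeq,
      Finset.insert_erase hV₀]
  set f : V → Fin p := fun w => if w = v then V₀ else if w = s then S else if w = t then T else V₀
    with hf_def
  have hfv : f v = V₀ := by simp [hf_def]
  have hfs : f s = S := by simp [hf_def, hsv]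
  have hft : f t = T := by simp [hf_def, htv, hst.symm]
  have hfE : ∀ w ∈ cover [e], f w ∈ E := by
    intro w hw
    rw [hcov] at hw
    rcases hemem w hw with h | h | h
    · rw [h, hfv]; exact hV₀
    · rw [h, hfs]; exact hSE
    · rw [h, hft]; exact hTE
  refine ⟨f, ?_, fun w hw => hEP (hfE w hw), hfv, hfE, ?_⟩
  · intro u hu w hw huw
    rw [hcov] at hu hw
    rcases hemem u (by exact_mod_cast hu) with h | h | h <;>
      rcases hemem w (by exact_mod_cast hw) with h' | h' | h' <;>
      subst h <;> subst h' <;>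
      simp only [hfv, hfs, hft] at huw ⊢ <;> first
        | rfl
        | (exact absurd huw hSV.symm)
        | (exact absurd huw hTV.symm)
        | (exact absurd huw hSV)
        | (exact absurd huw hTV)
        | (exact absurd huw hST)
        | (exact absurd huw hST.symm)
  · intro d hd
    rcases List.mem_cons.1 hd with h | h
    · subst h
      have : d.image f = E := by
        rw [he_eq, Finset.image_insert, Finset.image_insert, Finset.image_singleton,
          hfv, hfs, hft, hE_eq]
      rw [this]; exact hcE
    · simp at h

lemma embed_all_red (l : List (Finset V)) (hedge : ∀ e ∈ l, e.card = 3)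
    (c : Finset (Fin p) → Bool) (P : Finset (Fin p))
    (hall : ∀ t ⊆ P, t.card = 3 → c t = true) (hcard : (cover l).card ≤ P.card)
    (hne : (cover l).Nonempty) :
    ∃ f : V → Fin p, Set.InjOn f ↑(cover l) ∧ (∀ w ∈ cover l, f w ∈ P) ∧
      ∀ d ∈ l, c (d.image f) = true := by
  classical
  have hPne : P.Nonempty := Finset.card_pos.1 (lt_of_lt_of_le (Finset.card_pos.2 hne) hcard)
  obtain ⟨j₀, hj₀⟩ := hPne
  have hcard' : Fintype.card ↑(cover l) ≤ Fintype.card ↑P := by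
    rw [Fintype.card_coe, Fintype.card_coe]; exact hcard
  obtain ⟨emb⟩ := Function.Embedding.nonempty_of_card_le hcard'
  set f : V → Fin p := fun w => if h : w ∈ cover l then (emb ⟨w, h⟩ : Fin p) else j₀
    with hf_def
  have hfmem : ∀ w ∈ cover l, f w ∈ P := by
    intro w hw
    simp only [hf_def, dif_pos hw]
    exact (emb ⟨w, hw⟩).2
  refine ⟨f, ?_, hfmem, ?_⟩
  · intro u hu w hw huw
    have hu' : u ∈ cover l := by exact_mod_cast hu
    have hw' : w ∈ cover l := by exact_mod_cast hw
    simp only [hf_def, dif_pos hu', dif_pos hw'] at huw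
    have := emb.injective (Subtype.ext huw)
    exact congrArg Subtype.val this
  · intro d hd
    have hdc : d ⊆ cover l := edge_subset_cover hd
    apply hall
    · intro q hq
      obtain ⟨w, hw, rfl⟩ := Finset.mem_image.1 hq
      exact hfmem w (hdc hw)
    · rw [Finset.card_image_of_injOn (fun u hu w hw huw => by
        have hu' : u ∈ cover l := hdc hu
        have hw' : w ∈ cover l := hdc hw
        simp only [hf_def, dif_pos hu', dif_pos hw'] at huw
        exact congrArg Subtype.val (emb.injective (Subtype.ext huw)))]
      exact hedge d hd


end Emb

/-- The main induction: if there is no blue `K_n` inside `P` (i.e. every `n`-subset of `P`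
contains a red triple), and `P` is large enough, then any 3-uniform tree with `j` edges
embeds redly into `P`. -/
lemma core : ∀ N j n : ℕ, j + n ≤ N → 2 ≤ j → 3 ≤ n →
    ∀ {V : Type*} [DecidableEq V] (l : List (Finset V)), IsTreeList 3 l → l.length = j →
    ∀ {p : ℕ} (c : Finset (Fin p) → Bool) (P : Finset (Fin p)),
      j * (n - 1) + n % 2 ≤ P.card →
      (∀ B ⊆ P, B.card = n → ∃ t ⊆ B, t.card = 3 ∧ c t = true) →
      ∃ f : V → Fin p, Set.InjOn f ↑(cover l) ∧ (∀ w ∈ cover l, f w ∈ P) ∧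
        ∀ d ∈ l, c (d.image f) = true := by
  intro N
  induction N with
  | zero => intro j n h hj hn; omega
  | succ N ih =>
  intro j n hN hj hn V _ l hl hlen p c P hP hBlue
  have hedge := edge_card hl
  by_cases hn3 : n = 3
  · -- base case: no blue triple at all, so everything is red
    subst hn3
    have hall : ∀ t ⊆ P, t.card = 3 → c t = true := by
      intro t ht h3
      obtain ⟨t', ht', h3', hc'⟩ := hBlue t ht h3
      have : t' = t := Finset.eq_of_subset_of_card_le ht' (by omega)
      rwa [this] at hc'
    apply embed_all_red l hedge c P hall
    · rw [cover_card hl, hlen]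
      have : j * (3 - 1) + 3 % 2 = 2 * j + 1 := by omega
      omega
    · cases l with
      | nil => simp at hlen; omega
      | cons e l' =>
        have h3 := hedge e (by simp)
        have : e ⊆ cover (e :: l') := edge_subset_cover (by simp)
        exact ⟨(Finset.card_pos.1 (by omega)).choose,
          this (Finset.card_pos.1 (by omega)).choose_spec⟩
  · have hn4 : 4 ≤ n := by omega
    by_cases hBm : ∀ B ⊆ P, B.card = n - 1 → ∃ t ⊆ B, t.card = 3 ∧ c t = true
    · -- no blue K_{n-1} either: recurse with smaller clique
      apply ih j (n-1) (by omega) hj (by omega) l hl hlen c P ?_ ?_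
      · have hexp : (j-1) * (n-1) + (n-1) = j * (n-1) := by
          obtain ⟨j', hj'⟩ : ∃ j', j = j' + 1 := ⟨j - 1, by omega⟩
          subst hj'
          simp [add_mul]
        have h2 : n - 1 - 1 = n - 2 := by omega
        have hexp2 : j * (n - 2) + j = j * (n-1) := by
          obtain ⟨n', hn'⟩ : ∃ n', n = n' + 4 := ⟨n - 4, by omega⟩
          subst hn'
          have h1 : n' + 4 - 1 = (n' + 4 - 2) + 1 := by omega
          rw [h1, mul_add, mul_one]
        rw [h2]
        omega
      · intro B hB hBc
        exact hBm B hB (by omega)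
    · push_neg at hBm
      obtain ⟨B, hBP, hBcard, hBblue⟩ := hBm
      cases l with
      | nil => simp at hlen; omega
      | cons e l' =>
      have hl'_all : IsTreeList 3 l' ∧ (e ∩ cover l').card = 1 := by
        cases hl with
        | single e he => simp at hlen; omega
        | cons e l' hl' he hint => exact ⟨hl', hint⟩
      have hl' := hl'_all.1
      have he3 : e.card = 3 := hedge e (by simp)
      obtain ⟨v, hv⟩ : ∃ v, e ∩ cover l' = {v} := Finset.card_eq_one.1 hl'_all.2
      have hvcov : v ∈ cover l' :=
        (Finset.mem_inter.1 (hv ▸ Finset.mem_singleton_self v)).2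
      by_cases hj2 : j = 2
      · -- base case in j: a two-edge tree
        subst hj2
        match l', hl', hv with
        | [e₂], hl', hv =>
        have he₂3 : e₂.card = 3 := edge_card hl' e₂ (by simp)
        have hve₂ : v ∈ e₂ := by
          have := hvcov
          simpa [cover] using this
        by_cases hpair : ∃ E₁ ⊆ P, ∃ E₂ ⊆ P, E₁.card = 3 ∧ E₂.card = 3 ∧
            c E₁ = true ∧ c E₂ = true ∧ (E₁ ∩ E₂).card = 1
        · obtain ⟨E₁, hE₁P, E₂, hE₂P, hE₁3, hE₂3, hcE₁, hcE₂, hE12⟩ := hpair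
          obtain ⟨V₀, hV₀⟩ : ∃ V₀, E₁ ∩ E₂ = {V₀} := Finset.card_eq_one.1 hE12
          have hV₀1 : V₀ ∈ E₁ := (Finset.mem_inter.1 (hV₀ ▸ Finset.mem_singleton_self V₀)).1
          have hV₀2 : V₀ ∈ E₂ := (Finset.mem_inter.1 (hV₀ ▸ Finset.mem_singleton_self V₀)).2
          obtain ⟨f₀, hf₀inj, hf₀P, hf₀v, hf₀E, hf₀red⟩ :=
            single_embed c P e₂ he₂3 v hve₂ E₂ hE₂P hE₂3 V₀ hV₀2 hcE₂
          obtain ⟨x, y, hxy, hxyeq⟩ := Finset.card_eq_two.1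
            (by rw [Finset.card_sdiff_of_subset (Finset.singleton_subset_iff.2 hV₀1), hE₁3]; rfl :
              (E₁ \ {V₀}).card = 2)
          have hxmem : x ∈ E₁ \ {V₀} := hxyeq ▸ (by simp : x ∈ ({x, y} : Finset (Fin p)))
          have hymem : y ∈ E₁ \ {V₀} := hxyeq ▸ (by simp : y ∈ ({x, y} : Finset (Fin p)))
          have hxE₁ : x ∈ E₁ := (Finset.mem_sdiff.1 hxmem).1
          have hyE₁ : y ∈ E₁ := (Finset.mem_sdiff.1 hymem).1
          have hxV₀ : x ≠ V₀ := by
            intro h; exact absurd (Finset.mem_singleton_self V₀)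
              (h ▸ (Finset.mem_sdiff.1 hxmem).2)
          have hyV₀ : y ≠ V₀ := by
            intro h; exact absurd (Finset.mem_singleton_self V₀)
              (h ▸ (Finset.mem_sdiff.1 hymem).2)
          have hxE₂ : x ∉ E₂ := by
            intro h
            have : x ∈ E₁ ∩ E₂ := Finset.mem_inter.2 ⟨hxE₁, h⟩
            rw [hV₀, Finset.mem_singleton] at this
            exact hxV₀ this
          have hyE₂ : y ∉ E₂ := by
            intro h
            have : y ∈ E₁ ∩ E₂ := Finset.mem_inter.2 ⟨hyE₁, h⟩
            rw [hV₀, Finset.mem_singleton] at this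
            exact hyV₀ this
          have hE₁eq : insert V₀ ({x, y} : Finset (Fin p)) = E₁ := by
            rw [show ({x, y} : Finset (Fin p)) = E₁ \ {V₀} from hxyeq.symm,
              ← Finset.erase_eq, Finset.insert_erase hV₀1]
          apply exists_extend c P [e₂] f₀ hf₀inj hf₀P hf₀red e he3 v hv x y hxy
            (hE₁P hxE₁) (hE₁P hyE₁)
            (fun w hw h => hxE₂ (h ▸ hf₀E w hw))
            (fun w hw h => hyE₂ (h ▸ hf₀E w hw))
            (by rw [hf₀v, hE₁eq]; exact hcE₁)
        · -- no two red triples meet in exactly one point: large blue clique exists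
          exfalso
          have H : ∀ t₁ ⊆ P, ∀ t₂ ⊆ P, t₁.card = 3 → t₂.card = 3 → c t₁ = true →
              c t₂ = true → (t₁ ∩ t₂).card ≠ 1 := by
            intro t₁ h₁ t₂ h₂ hc₁ hc₂ hr₁ hr₂ h1
            exact hpair ⟨t₁, h₁, t₂, h₂, hc₁, hc₂, hr₁, hr₂, h1⟩
          obtain ⟨S, hSP, hSind, hScard⟩ := fam c P H
          have hn_le : n ≤ tau P.card := by
            apply tau_ge (by omega)
            have : (2:ℕ) * (n - 1) + n % 2 ≤ P.card := by
              have h2 : (2:ℕ) * (n-1) = 2 * (n-1) := rfl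
              omega
            exact this
          obtain ⟨B₂, hB₂S, hB₂card⟩ :=
            Finset.exists_subset_card_eq (le_trans hn_le hScard)
          obtain ⟨t, htB, ht3, htc⟩ := hBlue B₂ (hB₂S.trans hSP) hB₂card
          have := hSind t (htB.trans hB₂S) ht3
          rw [htc] at this
          simp at this
      · -- inductive step in j: peel off the blue K_{n-1}
        have hj3 : 3 ≤ j := by omega
        have hl'len : l'.length = j - 1 := by
          simp only [List.length_cons] at hlen; omega
        have hPB : (P \ B).card = P.card - (n - 1) := by
          rw [Finset.card_sdiff_of_subset hBP, hBcard]
        obtain ⟨f, hfinj, hfmem, hfred⟩ := ih (j-1) n (by omega) (by omega) hn l' hl' hl'len c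
          (P \ B)
          (by
            have hexp : (j-1) * (n-1) + (n-1) = j * (n-1) := by
              obtain ⟨j', hj'⟩ : ∃ j', j = j' + 1 := ⟨j - 1, by omega⟩
              subst hj'
              simp [add_mul]
            omega)
          (fun B' hB' hB'c => hBlue B' (hB'.trans Finset.sdiff_subset) hB'c)
        have hfv_mem : f v ∈ P \ B := hfmem v hvcov
        have hfvP : f v ∈ P := (Finset.mem_sdiff.1 hfv_mem).1
        have hfvB : f v ∉ B := (Finset.mem_sdiff.1 hfv_mem).2
        by_cases hxy : ∃ x ∈ B, ∃ y ∈ B, x ≠ y ∧ c (insert (f v) {x, y}) = true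
        · obtain ⟨x, hxB, y, hyB, hxyne, hcred⟩ := hxy
          apply exists_extend c P l' f hfinj
            (fun w hw => Finset.sdiff_subset (hfmem w hw)) hfred e he3 v hv x y hxyne
            (hBP hxB) (hBP hyB)
            (fun w hw h => (Finset.mem_sdiff.1 (hfmem w hw)).2 (h ▸ hxB))
            (fun w hw h => (Finset.mem_sdiff.1 (hfmem w hw)).2 (h ▸ hyB))
            hcred
        · exfalso
          have hB'P : insert (f v) B ⊆ P := Finset.insert_subset hfvP hBP
          have hB'card : (insert (f v) B).card = n := by
            rw [Finset.card_insert_of_notMem hfvB, hBcard]; omega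
          obtain ⟨t, htB', ht3, htc⟩ := hBlue (insert (f v) B) hB'P hB'card
          by_cases hfvt : f v ∈ t
          · have htfvB : t \ {f v} ⊆ B := by
              intro q hq
              rw [Finset.mem_sdiff, Finset.mem_singleton] at hq
              rcases Finset.mem_insert.1 (htB' hq.1) with h | h
              · exact absurd h hq.2
              · exact h
            obtain ⟨x, y, hxyne, hxyeq⟩ := Finset.card_eq_two.1
              (by rw [Finset.card_sdiff_of_subset (Finset.singleton_subset_iff.2 hfvt), ht3]; rfl :
                (t \ {f v}).card = 2)
            have hxB : x ∈ B := htfvB (hxyeq ▸ (by simp : x ∈ ({x,y} : Finset (Fin p))))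
            have hyB : y ∈ B := htfvB (hxyeq ▸ (by simp : y ∈ ({x,y} : Finset (Fin p))))
            have hteq : insert (f v) ({x, y} : Finset (Fin p)) = t := by
              rw [show ({x, y} : Finset (Fin p)) = t \ {f v} from hxyeq.symm,
                ← Finset.erase_eq, Finset.insert_erase hfvt]
            exact hxy ⟨x, hxB, y, hyB, hxyne, by rw [hteq]; exact htc⟩
          · have : t ⊆ B := by
              intro q hq
              rcases Finset.mem_insert.1 (htB' hq) with h | h
              · exact absurd (h ▸ hq) hfvt
              · exact h
            exact hBblue t this ht3 htc

section Lower

variable {p : ℕ}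

/-- bucket of a vertex: partition into consecutive blocks of size `2j` -/
def bucket (j : ℕ) (v : Fin p) : ℕ := (v : ℕ) / (2 * j)

/-- the extremal coloring: a triple is red iff it lies inside one bucket -/
def cLow (j : ℕ) : Finset (Fin p) → Bool := fun t => decide ((t.image (bucket j)).card ≤ 1)

lemma union_card_le_one {β : Type*} [DecidableEq β] {s t : Finset β} (hs : s.card ≤ 1)
    (ht : t.card ≤ 1) {a : β} (has : a ∈ s) (hat : a ∈ t) : (s ∪ t).card ≤ 1 := by
  rw [Finset.card_le_one] at hs ht ⊢
  intro u hu w hw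
  have key : ∀ x ∈ s ∪ t, x = a := by
    intro x hx
    rcases Finset.mem_union.1 hx with h | h
    · exact hs x h a has
    · exact ht x h a hat
  rw [key u hu, key w hw]

lemma tree_same_bucket {V : Type*} [DecidableEq V] {l : List (Finset V)}
    (hl : IsTreeList 3 l) (f : V → Fin p) (j : ℕ)
    (hred : ∀ e ∈ l, ((e.image f).image (bucket j)).card ≤ 1) :
    (((cover l).image f).image (bucket j)).card ≤ 1 := by
  induction hl with
  | single e he => simpa [cover] using hred e (by simp)
  | cons e l hl he hint ih =>
    have ih' := ih (fun d hd => hred d (List.mem_cons_of_mem e hd))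
    have h1 := hred e (by simp)
    obtain ⟨v, hv⟩ : ∃ v, e ∩ cover l = {v} := Finset.card_eq_one.1 hint
    have hve : v ∈ e := (Finset.mem_inter.1 (hv ▸ Finset.mem_singleton_self v)).1
    have hvc : v ∈ cover l := (Finset.mem_inter.1 (hv ▸ Finset.mem_singleton_self v)).2
    rw [cover_cons, Finset.image_union, Finset.image_union]
    exact union_card_le_one h1 ih'
      (Finset.mem_image_of_mem _ (Finset.mem_image_of_mem _ hve))
      (Finset.mem_image_of_mem _ (Finset.mem_image_of_mem _ hvc))

lemma no_red_tree {V : Type*} [Fintype V] [DecidableEq V] {j : ℕ} (hj : 1 ≤ j)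
    {l : List (Finset V)} (hl : IsTreeList 3 l) (hcover : cover l = Finset.univ)
    (hm : Fintype.card V = 2 * j + 1) (f : V → Fin p) (hinj : Function.Injective f)
    (hred : ∀ e ∈ l, cLow j (e.image f) = true) : False := by
  have h1 : ∀ e ∈ l, ((e.image f).image (bucket j)).card ≤ 1 := by
    intro e he
    have := hred e he
    rw [cLow, decide_eq_true_eq] at this
    exact this
  have h2 := tree_same_bucket hl f j h1
  rw [hcover] at h2
  have hA : (Finset.univ.image f).card = 2 * j + 1 := by
    rw [Finset.card_image_of_injective _ hinj, Finset.card_univ, hm]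
  have hmod : (Finset.univ.image f).card ≤ (Finset.range (2 * j)).card := by
    refine Finset.card_le_card_of_injOn (fun v : Fin p => (v : ℕ) % (2 * j)) ?_ ?_
    · intro v _
      rw [Finset.mem_coe, Finset.mem_range]
      exact Nat.mod_lt _ (by omega)
    · intro u hu w hw huw
      have huw' : (u : ℕ) % (2 * j) = (w : ℕ) % (2 * j) := huw
      have hbu : (u : ℕ) / (2 * j) = (w : ℕ) / (2 * j) := by
        rw [Finset.card_le_one] at h2
        exact h2 _ (Finset.mem_image_of_mem _ hu) _ (Finset.mem_image_of_mem _ hw)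
      have heq : (u : ℕ) = (w : ℕ) := by
        have hdu := (Nat.div_add_mod (u : ℕ) (2 * j)).symm
        rw [hbu, huw', Nat.div_add_mod] at hdu
        exact hdu
      exact Fin.ext heq
  rw [hA, Finset.card_range] at hmod
  omega

lemma blue_contra (j : ℕ) {n : ℕ} (g : Fin n → Fin p)
    (hblue : ∀ e : Finset (Fin n), e.card = 3 → cLow j (e.image g) = false)
    (s : Finset (Fin n)) (q : ℕ) (hmap : ∀ i ∈ s, bucket j (g i) ∈ Finset.range q)
    (hcard : q * 2 < s.card) : False := by
  obtain ⟨bval, _, hfib⟩ := Finset.exists_lt_card_fiber_of_mul_lt_card_of_maps_to hmap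
    (by rw [Finset.card_range]; exact hcard)
  obtain ⟨t3, ht3sub, ht3card⟩ := Finset.exists_subset_card_eq (show 3 ≤ _ from hfib)
  have hall : ∀ i ∈ t3, bucket j (g i) = bval := by
    intro i hi
    exact (Finset.mem_filter.1 (ht3sub hi)).2
  have him : ((t3.image g).image (bucket j)).card ≤ 1 := by
    rw [Finset.image_image]
    apply Finset.card_le_one.2
    intro u hu w hw
    obtain ⟨i1, hi1, rfl⟩ := Finset.mem_image.1 hu
    obtain ⟨i2, hi2, rfl⟩ := Finset.mem_image.1 hw
    show bucket j (g i1) = bucket j (g i2)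
    rw [hall i1 hi1, hall i2 hi2]
  have htrue : cLow j (t3.image g) = true := by
    rw [cLow]; exact decide_eq_true him
  have hfalse := hblue t3 ht3card
  rw [hfalse] at htrue
  simp at htrue

lemma no_blue_odd {j n : ℕ} (hj : 1 ≤ j) (hn : 3 ≤ n) (hodd : n % 2 = 1)
    (hple : p ≤ j * (n - 1)) (g : Fin n → Fin p)
    (hblue : ∀ e : Finset (Fin n), e.card = 3 → cLow j (e.image g) = false) : False := by
  set q := (n - 1) / 2 with hq_def
  have h2q : n - 1 = 2 * q := by omega
  have hjq : j * (n - 1) = 2 * j * q := by rw [h2q]; ring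
  apply blue_contra j g hblue Finset.univ q
  · intro i _
    rw [Finset.mem_range, bucket, Nat.div_lt_iff_lt_mul (by omega : 0 < 2 * j)]
    have hval : (g i : ℕ) < p := (g i).2
    have : q * (2 * j) = 2 * j * q := by ring
    omega
  · rw [Finset.card_univ, Fintype.card_fin]; omega

lemma no_blue_even {j n : ℕ} (hj : 1 ≤ j) (hn : 4 ≤ n) (heven : n % 2 = 0)
    (hple : p ≤ j * (n - 2) + 1) (g : Fin n → Fin p) (hginj : Function.Injective g)
    (hblue : ∀ e : Finset (Fin n), e.card = 3 → cLow j (e.image g) = false) : False := by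
  set q := (n - 2) / 2 with hq_def
  have h2q : n - 2 = 2 * q := by omega
  have hjq : j * (n - 2) = 2 * j * q := by rw [h2q]; ring
  have hble : ∀ i : Fin n, bucket j (g i) ≤ q := by
    intro i
    have hval : (g i : ℕ) < p := (g i).2
    rw [bucket]
    have : (g i : ℕ) < (q + 1) * (2 * j) := by
      have : (q + 1) * (2 * j) = 2 * j * q + 2 * j := by ring
      omega
    have := (Nat.div_lt_iff_lt_mul (by omega : 0 < 2 * j)).2 this
    omega
  have hbeq : ∀ i : Fin n, bucket j (g i) = q → (g i : ℕ) = 2 * j * q := by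
    intro i h
    have hd := Nat.div_add_mod (g i : ℕ) (2 * j)
    rw [bucket] at h
    rw [h] at hd
    have hval : (g i : ℕ) < p := (g i).2
    omega
  set s := Finset.univ.filter (fun i : Fin n => bucket j (g i) < q) with hs_def
  have hscard : n - 1 ≤ s.card := by
    have hcompl : (Finset.univ \ s).card ≤ 1 := by
      apply Finset.card_le_one.2
      intro u hu w hw
      have hu' : bucket j (g u) = q := by
        have := (Finset.mem_sdiff.1 hu).2
        rw [hs_def, Finset.mem_filter] at this
        push_neg at this
        have h1 := this (Finset.mem_univ u)
        have h2 := hble u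
        omega
      have hw' : bucket j (g w) = q := by
        have := (Finset.mem_sdiff.1 hw).2
        rw [hs_def, Finset.mem_filter] at this
        push_neg at this
        have h1 := this (Finset.mem_univ w)
        have h2 := hble w
        omega
      exact hginj (Fin.ext ((hbeq u hu').trans (hbeq w hw').symm))
    have hsub : s ⊆ Finset.univ := Finset.subset_univ s
    have := Finset.card_sdiff_of_subset hsub
    have hcu : (Finset.univ : Finset (Fin n)).card = n := by
      rw [Finset.card_univ, Fintype.card_fin]
    omega
  apply blue_contra j g hblue s q
  · intro i hi
    rw [Finset.mem_range]
    exact (Finset.mem_filter.1 hi).2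
  · omega

end Lower

end Stmt17

/-- `hRamsey E r n` is the Ramsey number `R(H, K_n^{(r)}; r)` where `H` is the
hypergraph with vertex type `V` and hyperedge set `E`. -/
noncomputable def hRamsey {V : Type*} [DecidableEq V] (E : Set (Finset V)) (r n : ℕ) : ℕ :=
  sInf {p | ∀ c : Finset (Fin p) → Bool,
    (∃ f : V → Fin p, Function.Injective f ∧ ∀ e ∈ E, c (e.image f) = true) ∨
    (∃ g : Fin n → Fin p, Function.Injective g ∧
      ∀ e : Finset (Fin n), e.card = r → c (e.image g) = false)}

theorem stmt_17 (j n : ℕ) (hj : 2 ≤ j) {V : Type*} [Fintype V] [DecidableEq V]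
    -- `T`: a 3-uniform tree on `2j+1` vertices:
    (l : List (Finset V)) (hl : IsTreeList 3 l) (hcover : l.foldr (· ∪ ·) ∅ = Finset.univ)
    (hm : Fintype.card V = 2 * j + 1) :
    (Odd n → 3 ≤ n → hRamsey {e | e ∈ l} 3 n = j * (n - 1) + 1) ∧
    (Even n → 4 ≤ n →
      j * (n - 2) + 2 ≤ hRamsey {e | e ∈ l} 3 n ∧ hRamsey {e | e ∈ l} 3 n ≤ j * (n - 1)) := by
  classical
  have hcover' : Stmt17.cover l = Finset.univ := hcover
  have hlen : l.length = j := by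
    have h1 := Stmt17.cover_card hl
    rw [hcover'] at h1
    rw [Finset.card_univ, hm] at h1
    omega
  set S := {p | ∀ c : Finset (Fin p) → Bool,
    (∃ f : V → Fin p, Function.Injective f ∧ ∀ e ∈ {e | e ∈ l}, c (e.image f) = true) ∨
    (∃ g : Fin n → Fin p, Function.Injective g ∧
      ∀ e : Finset (Fin n), e.card = 3 → c (e.image g) = false)} with hS_def
  have hR : hRamsey {e | e ∈ l} 3 n = sInf S := rfl
  have hmem_upper : 3 ≤ n → ∀ pp : ℕ, j * (n - 1) + n % 2 ≤ pp → pp ∈ S := by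
    intro hn pp hpp
    intro c
    by_cases hB : ∃ B : Finset (Fin pp), B.card = n ∧ ∀ t ⊆ B, t.card = 3 → c t = false
    · right
      obtain ⟨B, hBcard, hBblue⟩ := hB
      have hginj : Function.Injective (fun i => B.orderEmbOfFin hBcard i) :=
        fun i1 i2 h => (B.orderEmbOfFin hBcard).injective h
      refine ⟨fun i => B.orderEmbOfFin hBcard i, hginj, ?_⟩
      intro e he3
      apply hBblue
      · intro q hq
        obtain ⟨i, _, rfl⟩ := Finset.mem_image.1 hq
        exact B.orderEmbOfFin_mem hBcard i
      · rw [Finset.card_image_of_injective _ hginj, he3]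
    · left
      push_neg at hB
      have hBlue : ∀ B ⊆ (Finset.univ : Finset (Fin pp)), B.card = n →
          ∃ t ⊆ B, t.card = 3 ∧ c t = true := by
        intro B _ hBc
        obtain ⟨t, htB, ht3, htc⟩ := hB B hBc
        refine ⟨t, htB, ht3, ?_⟩
        cases hval : c t with
        | false => exact absurd hval htc
        | true => rfl
      obtain ⟨f, hfinj, _, hfred⟩ := Stmt17.core (j + n) j n le_rfl hj hn l hl hlen c
        Finset.univ (by rw [Finset.card_univ, Fintype.card_fin]; exact hpp) hBlue
      refine ⟨f, ?_, fun e he => hfred e he⟩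
      rw [hcover', Finset.coe_univ] at hfinj
      exact Set.injOn_univ.1 hfinj
  have hnot_mem : ∀ pp : ℕ, 3 ≤ n →
      (n % 2 = 1 ∧ pp ≤ j * (n - 1) ∨ n % 2 = 0 ∧ 4 ≤ n ∧ pp ≤ j * (n - 2) + 1) →
      pp ∉ S := by
    intro pp hn hcase hmem
    rcases hmem (Stmt17.cLow j) with ⟨f, hfinj, hfred⟩ | ⟨g, hginj, hblue⟩
    · exact Stmt17.no_red_tree (by omega) hl hcover' hm f hfinj (fun e he => hfred e he)
    · rcases hcase with ⟨hodd, hple⟩ | ⟨heven, hn4, hple⟩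
      · exact Stmt17.no_blue_odd (by omega) hn hodd hple g hblue
      · exact Stmt17.no_blue_even (by omega) hn4 heven hple g hginj hblue
  constructor
  · intro hodd h3n
    have hodd' : n % 2 = 1 := Nat.odd_iff.1 hodd
    rw [hR]
    apply le_antisymm
    · exact Nat.sInf_le (hmem_upper h3n (j * (n - 1) + 1) (by omega))
    · apply le_csInf ⟨j * (n - 1) + 1, hmem_upper h3n _ (by omega)⟩
      intro b hb
      by_contra hlt
      exact hnot_mem b h3n (Or.inl ⟨hodd', by omega⟩) hb
  · intro heven h4n
    have heven' : n % 2 = 0 := Nat.even_iff.1 heven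
    constructor
    · rw [hR]
      apply le_csInf ⟨j * (n - 1), hmem_upper (by omega) _ (by omega)⟩
      intro b hb
      by_contra hlt
      exact hnot_mem b (by omega) (Or.inr ⟨heven', h4n, by omega⟩) hb
    · rw [hR]
      exact Nat.sInf_le (hmem_upper (by omega) (j * (n - 1)) (by omega))
end

section
/- For every j ≥ 1, the 3-uniform loose path P_{2j+1}^{(3)} satisfies R(P_{2j+1}^{(3)}, K_4^{(3)}; 3) = 2j + 2. -/
/-- `hRamseyOn r S E n` is the Ramsey number `R(H, K_n^{(r)}; r)` where `H` is the
hypergraph with vertex set `S` and hyperedge set `E`. -/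
noncomputable def hRamseyOn {V : Type*} [DecidableEq V] (r : ℕ) (S : Finset V)
    (E : Set (Finset V)) (n : ℕ) : ℕ :=
  sInf {p | ∀ c : Finset (Fin p) → Bool,
    (∃ f : V → Fin p, Set.InjOn f ↑S ∧ ∀ e ∈ E, c (e.image f) = true) ∨
    (∃ g : Fin n → Fin p, Function.Injective g ∧
      ∀ e : Finset (Fin n), e.card = r → c (e.image g) = false)}

/-- The hyperedge set of the 3-uniform loose path `P_{2j+1}^{(3)}` with `j` hyperedges
on the vertices `0, 1, …, 2j`: the hyperedges are `{2i, 2i+1, 2i+2}` for `i < j`, so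
consecutive hyperedges share exactly one vertex. -/
def loosePathE (j : ℕ) : Set (Finset ℕ) :=
  {e | ∃ i < j, e = ({2 * i, 2 * i + 1, 2 * i + 2} : Finset ℕ)}


lemma tri_rot {V : Type*} [DecidableEq V] (a b c : V) :
    ({a, b, c} : Finset V) = {b, c, a} := by
  ext z; simp only [Finset.mem_insert, Finset.mem_singleton]; tauto

lemma tri_swap {V : Type*} [DecidableEq V] (a b c : V) :
    ({a, b, c} : Finset V) = {a, c, b} := by
  ext z; simp only [Finset.mem_insert, Finset.mem_singleton]; tauto

set_option maxHeartbeats 2000000 in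
lemma core {V : Type*} [DecidableEq V] (c : Finset V → Bool) (P Q : V → Prop)
    (s t u w x y : V)
    (hst : s ≠ t) (hsu : s ≠ u) (hsw : s ≠ w) (hsx : s ≠ x) (hsy : s ≠ y)
    (htu : t ≠ u) (htw : t ≠ w) (htx : t ≠ x) (hty : t ≠ y)
    (huw : u ≠ w) (hux : u ≠ x) (huy : u ≠ y)
    (hwx : w ≠ x) (hwy : w ≠ y) (hxy : x ≠ y)
    (hPt : P t) (hPu : P u) (hPw : P w) (hPx : P x) (hPy : P y)
    (hQs : Q s) (hQt : Q t) (hQu : Q u) (hQw : Q w) (hQx : Q x) (hQy : Q y)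
    (hstu : c {s, t, u} = true) :
    (∃ a b d e : V, Q a ∧ Q b ∧ Q d ∧ Q e ∧ a ≠ b ∧ a ≠ d ∧ a ≠ e ∧ b ≠ d ∧ b ≠ e ∧ d ≠ e ∧
      c {a, b, d} = false ∧ c {a, b, e} = false ∧ c {a, d, e} = false ∧ c {b, d, e} = false) ∨
    (∃ v1 v2 v3 v4 : V, P v1 ∧ P v2 ∧ P v3 ∧ P v4 ∧
      v1 ≠ v2 ∧ v1 ≠ v3 ∧ v1 ≠ v4 ∧ v2 ≠ v3 ∧ v2 ≠ v4 ∧ v3 ≠ v4 ∧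
      c {s, v1, v2} = true ∧ c {v2, v3, v4} = true) := by
  by_cases h1 : c {t, w, x} = true
  · exact Or.inr ⟨u, t, w, x, hPu, hPt, hPw, hPx, htu.symm, huw, hux, htw, htx, hwx,
      by rw [tri_swap]; exact hstu, h1⟩
  by_cases h2 : c {t, w, y} = true
  · exact Or.inr ⟨u, t, w, y, hPu, hPt, hPw, hPy, htu.symm, huw, huy, htw, hty, hwy,
      by rw [tri_swap]; exact hstu, h2⟩
  by_cases h3 : c {t, x, y} = true
  · exact Or.inr ⟨u, t, x, y, hPu, hPt, hPx, hPy, htu.symm, hux, huy, htx, hty, hxy,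
      by rw [tri_swap]; exact hstu, h3⟩
  by_cases h4 : c {u, w, x} = true
  · exact Or.inr ⟨t, u, w, x, hPt, hPu, hPw, hPx, htu, htw, htx, huw, hux, hwx, hstu, h4⟩
  by_cases h5 : c {u, w, y} = true
  · exact Or.inr ⟨t, u, w, y, hPt, hPu, hPw, hPy, htu, htw, hty, huw, huy, hwy, hstu, h5⟩
  by_cases h6 : c {u, x, y} = true
  · exact Or.inr ⟨t, u, x, y, hPt, hPu, hPx, hPy, htu, htx, hty, hux, huy, hxy, hstu, h6⟩
  simp only [Bool.not_eq_true] at h1 h2 h3 h4 h5 h6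
  by_cases hB : c {w, x, y} = true
  · -- {w,x,y} red
    by_cases k1 : c {s, t, w} = true
    · exact Or.inr ⟨t, w, x, y, hPt, hPw, hPx, hPy, htw, htx, hty, hwx, hwy, hxy, k1, hB⟩
    by_cases k2 : c {s, t, x} = true
    · exact Or.inr ⟨t, x, w, y, hPt, hPx, hPw, hPy, htx, htw, hty, hwx.symm, hxy, hwy, k2,
        by rw [show ({x, w, y} : Finset V) = {w, x, y} from tri_swap w x y ▸ tri_rot x w y ▸ rfl]; exact hB⟩
    by_cases k3 : c {s, t, y} = true
    · exact Or.inr ⟨t, y, w, x, hPt, hPy, hPw, hPx, hty, htw, htx, hwy.symm, hxy.symm, hwx, k3,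
        by rw [show ({y, w, x} : Finset V) = {w, x, y} from by ext z; simp only [Finset.mem_insert, Finset.mem_singleton]; tauto]; exact hB⟩
    by_cases k4 : c {s, u, w} = true
    · exact Or.inr ⟨u, w, x, y, hPu, hPw, hPx, hPy, huw, hux, huy, hwx, hwy, hxy, k4, hB⟩
    by_cases k5 : c {s, u, x} = true
    · exact Or.inr ⟨u, x, w, y, hPu, hPx, hPw, hPy, hux, huw, huy, hwx.symm, hxy, hwy, k5,
        by rw [show ({x, w, y} : Finset V) = {w, x, y} from by ext z; simp only [Finset.mem_insert, Finset.mem_singleton]; tauto]; exact hB⟩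
    by_cases k6 : c {s, u, y} = true
    · exact Or.inr ⟨u, y, w, x, hPu, hPy, hPw, hPx, huy, huw, hux, hwy.symm, hxy.symm, hwx, k6,
        by rw [show ({y, w, x} : Finset V) = {w, x, y} from by ext z; simp only [Finset.mem_insert, Finset.mem_singleton]; tauto]; exact hB⟩
    simp only [Bool.not_eq_true] at k1 k2 k3 k4 k5 k6
    -- derive swx, swy red
    by_cases dwx : c {s, w, x} = true
    · -- need tux or tuy
      by_cases Ex : c {t, u, x} = true
      · exact Or.inr ⟨w, x, t, u, hPw, hPx, hPt, hPu, hwx, htw.symm, huw.symm, htx.symm,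
          hux.symm, htu, dwx,
          by rw [show ({x, t, u} : Finset V) = {t, u, x} from by ext z; simp only [Finset.mem_insert, Finset.mem_singleton]; tauto]; exact Ex⟩
      by_cases dwy : c {s, w, y} = true
      · by_cases Ey : c {t, u, y} = true
        · exact Or.inr ⟨w, y, t, u, hPw, hPy, hPt, hPu, hwy, htw.symm, huw.symm, hty.symm,
            huy.symm, htu, dwy,
            by rw [show ({y, t, u} : Finset V) = {t, u, y} from by ext z; simp only [Finset.mem_insert, Finset.mem_singleton]; tauto]; exact Ey⟩
        · simp only [Bool.not_eq_true] at Ex Ey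
          exact Or.inl ⟨t, u, x, y, hQt, hQu, hQx, hQy, htu, htx, hty, hux, huy, hxy,
            Ex, Ey, h3, h6⟩
      · simp only [Bool.not_eq_true] at dwy
        exact Or.inl ⟨s, t, w, y, hQs, hQt, hQw, hQy, hst, hsw, hsy, htw, hty, hwy,
          k1, k3, dwy, h2⟩
    · simp only [Bool.not_eq_true] at dwx
      exact Or.inl ⟨s, t, w, x, hQs, hQt, hQw, hQx, hst, hsw, hsx, htw, htx, hwx,
        k1, k2, dwx, h1⟩
  · simp only [Bool.not_eq_true] at hB
    exact Or.inl ⟨t, w, x, y, hQt, hQw, hQx, hQy, htw, htx, hty, hwx, hwy, hxy,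
      h1, h2, h3, hB⟩

lemma pick3 {V : Type*} [DecidableEq V] (L : Finset V) (h : 3 ≤ L.card) :
    ∃ w ∈ L, ∃ x ∈ L, ∃ y ∈ L, w ≠ x ∧ w ≠ y ∧ x ≠ y := by
  obtain ⟨w, hw⟩ := Finset.card_pos.mp (show 0 < L.card by omega)
  obtain ⟨x, hx⟩ := Finset.card_pos.mp (show 0 < (L.erase w).card by
    rw [Finset.card_erase_of_mem hw]; omega)
  obtain ⟨y, hy⟩ := Finset.card_pos.mp (show 0 < ((L.erase w).erase x).card by
    rw [Finset.card_erase_of_mem hx, Finset.card_erase_of_mem hw]; omega)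
  obtain ⟨hxw, hx'⟩ := Finset.mem_erase.mp hx
  obtain ⟨hyx, hy'⟩ := Finset.mem_erase.mp hy
  obtain ⟨hyw, hy''⟩ := Finset.mem_erase.mp hy'
  exact ⟨w, hw, x, hx', y, hy'', fun h => hxw h.symm, fun h => hyw h.symm, fun h => hyx h.symm⟩

/-- Extending a loose path with `m+1` edges to one with `m+2` edges by replacing the
last edge's free vertices with `v1, v2` and appending `{v2, v3, v4}`. -/
lemma extend {V : Type*} [DecidableEq V] (T : Finset V) (c : Finset V → Bool) (m : ℕ)
    (f : ℕ → V)
    (hinj : Set.InjOn f ↑(Finset.range (2 * (m + 1) + 1)))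
    (hmem : ∀ k < 2 * (m + 1) + 1, f k ∈ T)
    (hred : ∀ i < m + 1, c {f (2 * i), f (2 * i + 1), f (2 * i + 2)} = true)
    (v1 v2 v3 v4 : V)
    (hT1 : v1 ∈ T) (hT2 : v2 ∈ T) (hT3 : v3 ∈ T) (hT4 : v4 ∈ T)
    (hf1 : ∀ k < 2 * m + 1, v1 ≠ f k) (hf2 : ∀ k < 2 * m + 1, v2 ≠ f k)
    (hf3 : ∀ k < 2 * m + 1, v3 ≠ f k) (hf4 : ∀ k < 2 * m + 1, v4 ≠ f k)
    (d12 : v1 ≠ v2) (d13 : v1 ≠ v3) (d14 : v1 ≠ v4)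
    (d23 : v2 ≠ v3) (d24 : v2 ≠ v4) (d34 : v3 ≠ v4)
    (e1 : c {f (2 * m), v1, v2} = true) (e2 : c {v2, v3, v4} = true) :
    ∃ f' : ℕ → V, Set.InjOn f' ↑(Finset.range (2 * (m + 2) + 1)) ∧
      (∀ k < 2 * (m + 2) + 1, f' k ∈ T) ∧
      ∀ i < m + 2, c {f' (2 * i), f' (2 * i + 1), f' (2 * i + 2)} = true := by
  set f' : ℕ → V := fun k =>
    if k < 2 * m + 1 then f k
    else if k = 2 * m + 1 then v1
    else if k = 2 * m + 2 then v2
    else if k = 2 * m + 3 then v3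
    else v4 with hf'
  have rlow : ∀ k, k < 2 * m + 1 → f' k = f k := fun k hk => if_pos hk
  have r1 : f' (2 * m + 1) = v1 := by
    show (if _ then _ else _) = _
    rw [if_neg (by omega), if_pos rfl]
  have r2 : f' (2 * m + 2) = v2 := by
    show (if _ then _ else _) = _
    rw [if_neg (by omega), if_neg (by omega), if_pos rfl]
  have r3 : f' (2 * m + 3) = v3 := by
    show (if _ then _ else _) = _
    rw [if_neg (by omega), if_neg (by omega), if_neg (by omega), if_pos rfl]
  have r4 : f' (2 * m + 4) = v4 := by
    show (if _ then _ else _) = _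
    rw [if_neg (by omega), if_neg (by omega), if_neg (by omega), if_neg (by omega)]
  have hval : ∀ k, k < 2 * (m + 2) + 1 → f' k = f k ∧ k < 2 * m + 1 ∨
      (k = 2 * m + 1 ∧ f' k = v1) ∨ (k = 2 * m + 2 ∧ f' k = v2) ∨
      (k = 2 * m + 3 ∧ f' k = v3) ∨ (k = 2 * m + 4 ∧ f' k = v4) := by
    intro k hk
    rcases (by omega : k < 2 * m + 1 ∨ k = 2 * m + 1 ∨ k = 2 * m + 2 ∨ k = 2 * m + 3 ∨
        k = 2 * m + 4) with h | h | h | h | h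
    · exact Or.inl ⟨rlow k h, h⟩
    · subst h; exact Or.inr (Or.inl ⟨rfl, r1⟩)
    · subst h; exact Or.inr (Or.inr (Or.inl ⟨rfl, r2⟩))
    · subst h; exact Or.inr (Or.inr (Or.inr (Or.inl ⟨rfl, r3⟩)))
    · subst h; exact Or.inr (Or.inr (Or.inr (Or.inr ⟨rfl, r4⟩)))
  refine ⟨f', ?_, ?_, ?_⟩
  · intro k1 hk1 k2 hk2 heq
    simp only [Finset.coe_range, Set.mem_Iio] at hk1 hk2
    rcases hval k1 hk1 with ⟨q1, h1⟩ | ⟨h1, q1⟩ | ⟨h1, q1⟩ | ⟨h1, q1⟩ | ⟨h1, q1⟩ <;>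
      rcases hval k2 hk2 with ⟨q2, h2⟩ | ⟨h2, q2⟩ | ⟨h2, q2⟩ | ⟨h2, q2⟩ | ⟨h2, q2⟩ <;>
      rw [q1, q2] at heq
    · exact hinj (by simp only [Finset.coe_range, Set.mem_Iio]; omega)
        (by simp only [Finset.coe_range, Set.mem_Iio]; omega) heq
    · exact absurd heq.symm (hf1 k1 h1)
    · exact absurd heq.symm (hf2 k1 h1)
    · exact absurd heq.symm (hf3 k1 h1)
    · exact absurd heq.symm (hf4 k1 h1)
    · exact absurd heq (hf1 k2 h2)
    · omega
    · exact absurd heq d12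
    · exact absurd heq d13
    · exact absurd heq d14
    · exact absurd heq (hf2 k2 h2)
    · exact absurd heq.symm d12
    · omega
    · exact absurd heq d23
    · exact absurd heq d24
    · exact absurd heq (hf3 k2 h2)
    · exact absurd heq.symm d13
    · exact absurd heq.symm d23
    · omega
    · exact absurd heq d34
    · exact absurd heq (hf4 k2 h2)
    · exact absurd heq.symm d14
    · exact absurd heq.symm d24
    · exact absurd heq.symm d34
    · omega
  · intro k hk
    rcases hval k hk with ⟨q, h⟩ | ⟨h, q⟩ | ⟨h, q⟩ | ⟨h, q⟩ | ⟨h, q⟩ <;> rw [q]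
    · exact hmem k (by omega)
    · exact hT1
    · exact hT2
    · exact hT3
    · exact hT4
  · intro i hi
    rcases (by omega : i < m ∨ i = m ∨ i = m + 1) with h | h | h
    · rw [rlow (2 * i) (by omega), rlow (2 * i + 1) (by omega), rlow (2 * i + 2) (by omega)]
      exact hred i (by omega)
    · rw [h]
      rw [rlow (2 * m) (by omega), show 2 * m + 1 = 2 * m + 1 from rfl, r1, r2]
      exact e1
    · rw [h]
      rw [show 2 * (m + 1) = 2 * m + 2 from by ring, show 2 * m + 2 + 1 = 2 * m + 3 from rfl,
        show 2 * m + 2 + 2 = 2 * m + 4 from rfl, r2, r3, r4]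
      exact e2

lemma onePath {V : Type*} [DecidableEq V] (T : Finset V) (c : Finset V → Bool)
    (x1 x2 x3 : V) (m1 : x1 ∈ T) (m2 : x2 ∈ T) (m3 : x3 ∈ T)
    (d12 : x1 ≠ x2) (d13 : x1 ≠ x3) (d23 : x2 ≠ x3)
    (hr : c {x1, x2, x3} = true) :
    ∃ f : ℕ → V, Set.InjOn f ↑(Finset.range 3) ∧ (∀ k < 3, f k ∈ T) ∧
      ∀ i < 1, c {f (2 * i), f (2 * i + 1), f (2 * i + 2)} = true := by
  refine ⟨fun k => if k = 0 then x1 else if k = 1 then x2 else x3, ?_, ?_, ?_⟩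
  · intro k1 hk1 k2 hk2 heq
    simp only [Finset.coe_range, Set.mem_Iio] at hk1 hk2
    interval_cases k1 <;> interval_cases k2 <;> simp_all
  · intro k hk
    interval_cases k <;> simp [m1, m2, m3]
  · intro i hi
    interval_cases i
    simpa using hr
lemma main_ind {V : Type*} [DecidableEq V] (m : ℕ) :
    ∀ (T : Finset V) (c : Finset V → Bool), 2 * (m + 1) + 2 ≤ T.card →
    (∃ f : ℕ → V, Set.InjOn f ↑(Finset.range (2 * (m + 1) + 1)) ∧
        (∀ k < 2 * (m + 1) + 1, f k ∈ T) ∧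
        ∀ i < m + 1, c {f (2 * i), f (2 * i + 1), f (2 * i + 2)} = true) ∨
    (∃ a b d e : V, a ∈ T ∧ b ∈ T ∧ d ∈ T ∧ e ∈ T ∧
        a ≠ b ∧ a ≠ d ∧ a ≠ e ∧ b ≠ d ∧ b ≠ e ∧ d ≠ e ∧
        c {a, b, d} = false ∧ c {a, b, e} = false ∧ c {a, d, e} = false ∧
        c {b, d, e} = false) := by
  induction m with
  | zero =>
    intro T c hcard
    obtain ⟨b, hb, d, hd, e, he, hbd, hbe, hde⟩ := pick3 T (by omega)
    have hL : 1 ≤ (T \ {b, d, e}).card := by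
      have hsub : ({b, d, e} : Finset V) ⊆ T := by
        intro z hz
        simp only [Finset.mem_insert, Finset.mem_singleton] at hz
        rcases hz with rfl | rfl | rfl <;> assumption
      have h3 : ({b, d, e} : Finset V).card ≤ 3 := by
        apply le_trans (Finset.card_insert_le _ _)
        simp [Finset.card_insert_le]
        exact lt_of_le_of_lt Finset.card_le_two (by norm_num)
      rw [Finset.card_sdiff_of_subset hsub]; omega
    obtain ⟨a, ha⟩ := Finset.card_pos.mp (show 0 < (T \ {b, d, e}).card by omega)
    rw [Finset.mem_sdiff] at ha
    obtain ⟨haT, ha'⟩ := ha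
    simp only [Finset.mem_insert, Finset.mem_singleton, not_or] at ha'
    obtain ⟨hab, had, hae⟩ := ha'
    by_cases p1 : c {a, b, d} = true
    · exact Or.inl (onePath T c a b d haT hb hd hab had hbd p1)
    by_cases p2 : c {a, b, e} = true
    · exact Or.inl (onePath T c a b e haT hb he hab hae hbe p2)
    by_cases p3 : c {a, d, e} = true
    · exact Or.inl (onePath T c a d e haT hd he had hae hde p3)
    by_cases p4 : c {b, d, e} = true
    · exact Or.inl (onePath T c b d e hb hd he hbd hbe hde p4)
    simp only [Bool.not_eq_true] at p1 p2 p3 p4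
    exact Or.inr ⟨a, b, d, e, haT, hb, hd, he, hab, had, hae, hbd, hbe, hde, p1, p2, p3, p4⟩
  | succ m ih =>
    intro T c hcard
    rcases ih T c (by omega) with ⟨f, hinj, hmem, hred⟩ | hblue
    · have hne : ∀ k1 k2, k1 < 2 * (m + 1) + 1 → k2 < 2 * (m + 1) + 1 → k1 ≠ k2 →
          f k1 ≠ f k2 := by
        intro k1 k2 h1 h2 hk heq
        exact hk (hinj (by simp only [Finset.coe_range, Set.mem_Iio]; omega)
          (by simp only [Finset.coe_range, Set.mem_Iio]; omega) heq)
      have hsub : (Finset.range (2 * (m + 1) + 1)).image f ⊆ T := by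
        intro v hv
        obtain ⟨k, hk, rfl⟩ := Finset.mem_image.mp hv
        exact hmem k (Finset.mem_range.mp hk)
      have hL : 3 ≤ (T \ (Finset.range (2 * (m + 1) + 1)).image f).card := by
        rw [Finset.card_sdiff_of_subset hsub, Finset.card_image_of_injOn hinj, Finset.card_range]
        omega
      obtain ⟨w, hw, x, hx, y, hy, hwx, hwy, hxy⟩ := pick3 _ hL
      rw [Finset.mem_sdiff] at hw hx hy
      have hnotim : ∀ v, v ∉ (Finset.range (2 * (m + 1) + 1)).image f →
          ∀ k, k < 2 * (m + 1) + 1 → v ≠ f k := by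
        intro v hv k hk heq
        exact hv (Finset.mem_image.mpr ⟨k, Finset.mem_range.mpr hk, heq.symm⟩)
      have hwf := hnotim w hw.2
      have hxf := hnotim x hx.2
      have hyf := hnotim y hy.2
      rcases core c (fun v => v ∈ T ∧ ∀ k, k < 2 * m + 1 → v ≠ f k) (fun v => v ∈ T)
          (f (2 * m)) (f (2 * m + 1)) (f (2 * m + 2)) w x y
          (hne _ _ (by omega) (by omega) (by omega))
          (hne _ _ (by omega) (by omega) (by omega))
          ((hwf (2 * m) (by omega)).symm) ((hxf (2 * m) (by omega)).symm)
          ((hyf (2 * m) (by omega)).symm)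
          (hne _ _ (by omega) (by omega) (by omega))
          ((hwf (2 * m + 1) (by omega)).symm) ((hxf (2 * m + 1) (by omega)).symm)
          ((hyf (2 * m + 1) (by omega)).symm)
          ((hwf (2 * m + 2) (by omega)).symm) ((hxf (2 * m + 2) (by omega)).symm)
          ((hyf (2 * m + 2) (by omega)).symm)
          hwx hwy hxy
          ⟨hmem _ (by omega), fun k hk => hne _ _ (by omega) (by omega) (by omega)⟩
          ⟨hmem _ (by omega), fun k hk => hne _ _ (by omega) (by omega) (by omega)⟩
          ⟨hw.1, fun k hk => hwf k (by omega)⟩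
          ⟨hx.1, fun k hk => hxf k (by omega)⟩
          ⟨hy.1, fun k hk => hyf k (by omega)⟩
          (hmem _ (by omega)) (hmem _ (by omega)) (hmem _ (by omega))
          hw.1 hx.1 hy.1
          (hred m (by omega)) with hb |
          ⟨v1, v2, v3, v4, P1, P2, P3, P4, d12, d13, d14, d23, d24, d34, e1, e2⟩
      · exact Or.inr hb
      · exact Or.inl (extend T c m f hinj hmem hred v1 v2 v3 v4 P1.1 P2.1 P3.1 P4.1
          P1.2 P2.2 P3.2 P4.2 d12 d13 d14 d23 d24 d34 e1 e2)
    · exact Or.inr hblue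
lemma inj4 {W : Type*} (a b d e : W) (hab : a ≠ b) (had : a ≠ d) (hae : a ≠ e)
    (hbd : b ≠ d) (hbe : b ≠ e) (hde : d ≠ e) :
    Function.Injective (fun i : Fin 4 => if i = 0 then a else if i = 1 then b
      else if i = 2 then d else e) := by
  intro i1 i2 h
  fin_cases i1 <;> fin_cases i2 <;> simp_all

lemma tri_enum : ∀ e : Finset (Fin 4), e.card = 3 →
    e = {0, 1, 2} ∨ e = {0, 1, 3} ∨ e = {0, 2, 3} ∨ e = {1, 2, 3} := by decide

theorem stmt_18 (j : ℕ) (hj : 1 ≤ j) :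
    hRamseyOn 3 (Finset.range (2 * j + 1)) (loosePathE j) 4 = 2 * j + 2 := by
  obtain ⟨m, rfl⟩ : ∃ m, j = m + 1 := ⟨j - 1, by omega⟩
  unfold hRamseyOn
  set S : Set ℕ := {p | ∀ c : Finset (Fin p) → Bool,
    (∃ f : ℕ → Fin p, Set.InjOn f ↑(Finset.range (2 * (m + 1) + 1)) ∧
      ∀ e ∈ loosePathE (m + 1), c (e.image f) = true) ∨
    (∃ g : Fin 4 → Fin p, Function.Injective g ∧
      ∀ e : Finset (Fin 4), e.card = 3 → c (e.image g) = false)} with hS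
  have hmem2 : (2 * (m + 1) + 2) ∈ S := by
    intro c
    rcases main_ind (V := Fin (2 * (m + 1) + 2)) m Finset.univ c
        (by simp) with
      ⟨f, hinj, hfT, hred⟩ | ⟨a, b, d, e, _, _, _, _, hab, had, hae, hbd, hbe, hde, q1, q2, q3, q4⟩
    · refine Or.inl ⟨f, hinj, ?_⟩
      rintro e ⟨i, hij, rfl⟩
      rw [Finset.image_insert, Finset.image_insert, Finset.image_singleton]
      exact hred i hij
    · refine Or.inr ⟨fun i : Fin 4 => if i = 0 then a else if i = 1 then b
        else if i = 2 then d else e, inj4 a b d e hab had hae hbd hbe hde, ?_⟩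
      intro e' he'
      rcases tri_enum e' he' with rfl | rfl | rfl | rfl <;>
        rw [Finset.image_insert, Finset.image_insert, Finset.image_singleton]
      · exact q1
      · exact q2
      · exact q3
      · exact q4
  have hlb : ∀ p ∈ S, 2 * (m + 1) + 2 ≤ p := by
    intro p hp
    by_contra hlt
    push_neg at hlt
    rcases lt_or_ge p (2 * (m + 1) + 1) with hsmall | hbig
    · rcases hp (fun _ => true) with ⟨f, hfi, _⟩ | ⟨g, hgi, hge⟩
      · have hc := Finset.card_le_univ ((Finset.range (2 * (m + 1) + 1)).image f)
        rw [Finset.card_image_of_injOn hfi, Finset.card_range, Fintype.card_fin] at hc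
        omega
      · simpa using hge {0, 1, 2} (by decide)
    · have hp' : p = 2 * (m + 1) + 1 := by omega
      subst hp'
      haveI : NeZero (2 * (m + 1) + 1) := ⟨by omega⟩
      set c : Finset (Fin (2 * (m + 1) + 1)) → Bool :=
        fun e0 => !decide ((0 : Fin (2 * (m + 1) + 1)) ∈ e0) with hc
      have hfalse : ∀ e0, c e0 = false → (0 : Fin (2 * (m + 1) + 1)) ∈ e0 := by
        intro e0 h; rw [hc] at h; simpa using h
      have htrue : ∀ e0, c e0 = true → (0 : Fin (2 * (m + 1) + 1)) ∉ e0 := by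
        intro e0 h; rw [hc] at h; simpa using h
      rcases hp c with ⟨f, hfi, hfe⟩ | ⟨g, hgi, hge⟩
      · have himg : (Finset.range (2 * (m + 1) + 1)).image f = Finset.univ := by
          apply Finset.eq_univ_of_card
          rw [Finset.card_image_of_injOn hfi, Finset.card_range, Fintype.card_fin]
        have h0 : (0 : Fin (2 * (m + 1) + 1)) ∈ (Finset.range (2 * (m + 1) + 1)).image f :=
          himg ▸ Finset.mem_univ 0
        obtain ⟨k, hk, hfk⟩ := Finset.mem_image.mp h0
        rw [Finset.mem_range] at hk
        obtain ⟨i, hij, hke⟩ : ∃ i, i < m + 1 ∧ k ∈ ({2 * i, 2 * i + 1, 2 * i + 2} : Finset ℕ) := by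
          rcases lt_or_ge k (2 * (m + 1)) with h | h
          · refine ⟨k / 2, ?_, ?_⟩
            · omega
            · have h2 := Nat.div_add_mod k 2
              have h3 : k % 2 < 2 := Nat.mod_lt _ (by norm_num)
              simp only [Finset.mem_insert, Finset.mem_singleton]
              omega
          · refine ⟨m, by omega, ?_⟩
            simp only [Finset.mem_insert, Finset.mem_singleton]
            omega
        have hc1 := hfe ({2 * i, 2 * i + 1, 2 * i + 2} : Finset ℕ) ⟨i, hij, rfl⟩
        exact htrue _ hc1 (Finset.mem_image.mpr ⟨k, hke, hfk⟩)
      · by_cases hex : ∃ i0 : Fin 4, g i0 = 0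
        · obtain ⟨i0, hi0⟩ := hex
          have hcard : ((Finset.univ : Finset (Fin 4)).erase i0).card = 3 := by
            rw [Finset.card_erase_of_mem (Finset.mem_univ _), Finset.card_univ]
            rfl
          obtain ⟨k', hk', hgk'⟩ := Finset.mem_image.mp (hfalse _ (hge _ hcard))
          exact (Finset.mem_erase.mp hk').1 (hgi (hgk'.trans hi0.symm))
        · obtain ⟨k', _, hgk'⟩ :=
            Finset.mem_image.mp (hfalse _ (hge ({0, 1, 2} : Finset (Fin 4)) (by decide)))
          exact hex ⟨k', hgk'⟩
  exact le_antisymm (Nat.sInf_le hmem2) (le_csInf ⟨_, hmem2⟩ hlb)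
end

section
/- If j is an even positive integer such that p = 3j + 1 is prime, then R(C_4^{(3)}, K_{2j+1}^{(3)}; 3) > 3j + 1; that is, there is a red/blue coloring of the hyperedges of K_{3j+1}^{(3)} with no red C_4^{(3)} and no blue K_{2j+1}^{(3)}. -/
/-- The 3-uniform loose cycle `C_4^{(3)}`: two 3-element hyperedges on four vertices
whose intersection has exactly two vertices. -/
def C4 : Set (Finset ℕ) := {({0, 1, 2} : Finset ℕ), ({1, 2, 3} : Finset ℕ)}

open Finset

def Arrow (p n : ℕ) : Prop := ∀ c : Finset (Fin p) → Bool,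
    (∃ f : ℕ → Fin p, Set.InjOn f ↑(Finset.range 4) ∧ ∀ e ∈ C4, c (e.image f) = true) ∨
    (∃ g : Fin n → Fin p, Function.Injective g ∧
      ∀ e : Finset (Fin n), e.card = 3 → c (e.image g) = false)

lemma arrow_mono {p q n : ℕ} (h : Arrow p n) (hpq : p ≤ q) : Arrow q n := by
  intro c
  have emb : Fin p ↪ Fin q := (Fin.castLEEmb hpq)
  rcases h (fun e => c (e.map emb)) with ⟨f, hf, hc⟩ | ⟨g, hg, hc⟩
  · left
    refine ⟨emb ∘ f, fun a ha b hb hab => hf ha hb (emb.injective hab), fun e he => ?_⟩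
    have := hc e he
    rwa [Finset.map_eq_image, Finset.image_image] at this
  · right
    refine ⟨emb ∘ g, emb.injective.comp hg, fun e he => ?_⟩
    have := hc e he
    rwa [Finset.map_eq_image, Finset.image_image] at this

lemma arrow_upper (n : ℕ) (hn : 0 < n) : Arrow (n*n) n := by
  classical
  intro c
  have hN : 0 < n*n := Nat.mul_pos hn hn
  by_cases hred : ∃ x y u v : Fin (n*n), u ≠ v ∧ u ≠ x ∧ u ≠ y ∧ v ≠ x ∧ v ≠ y ∧ x ≠ y ∧
      c {x, y, u} = true ∧ c {x, y, v} = true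
  · left
    obtain ⟨x, y, u, v, huv, hux, huy, hvx, hvy, hxy, h1, h2⟩ := hred
    refine ⟨fun k => if k = 0 then u else if k = 1 then x else if k = 2 then y else v, ?_, ?_⟩
    · intro a ha b hb hab
      simp only [coe_range, Set.mem_Iio] at ha hb
      interval_cases a <;> interval_cases b <;> simp_all
    · intro e he
      rcases he with rfl | rfl
      · have : (({0,1,2} : Finset ℕ).image
            (fun k => if k = 0 then u else if k = 1 then x else if k = 2 then y else v)) = {x, y, u} := by
          ext t; simp; try tauto
        rw [this]; exact h1
      · have : (({1,2,3} : Finset ℕ).image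
            (fun k => if k = 0 then u else if k = 1 then x else if k = 2 then y else v)) = {x, y, v} := by
          ext t; simp; try tauto
        rw [this]; exact h2
  · right
    push_neg at hred
    have key : ∀ t, t ≤ n → ∃ T : Finset (Fin (n*n)), T.card = t ∧
        ∀ s ⊆ T, s.card = 3 → c s = false := by
      intro t
      induction t with
      | zero => exact fun _ => ⟨∅, card_empty, fun s hs h3 => by
          rw [subset_empty] at hs; simp [hs] at h3⟩
      | succ t ih =>
        intro hle
        obtain ⟨T, hTc, hTb⟩ := ih (Nat.le_of_succ_le hle)
        set B := (univ : Finset (Fin (n*n))).filter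
          (fun w => w ∈ T ∨ ∃ a ∈ T, ∃ b ∈ T, a ≠ b ∧ c {a, b, w} = true) with hB
        have hBsub : B ⊆ T ∪ (B \ T) := fun w hw => by
          by_cases h : w ∈ T
          · exact mem_union_left _ h
          · exact mem_union_right _ (mem_sdiff.mpr ⟨hw, h⟩)
        have hBT : (B \ T).card ≤ t * t := by
          by_contra hcon
          push_neg at hcon
          have hmap : ∀ w ∈ B \ T, (fun w => if h : ∃ q : Fin (n*n) × Fin (n*n),
              q.1 ∈ T ∧ q.2 ∈ T ∧ q.1 ≠ q.2 ∧ c {q.1, q.2, w} = true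
              then h.choose else (⟨0, hN⟩, ⟨0, hN⟩)) w ∈ T ×ˢ T := by
            intro w hw
            obtain ⟨hwB, hwT⟩ := mem_sdiff.mp hw
            obtain ⟨-, hor⟩ := mem_filter.mp hwB
            rcases hor with h | ⟨a, ha, b, hb, hab, hc⟩
            · exact absurd h hwT
            · have hex : ∃ q : Fin (n*n) × Fin (n*n),
                  q.1 ∈ T ∧ q.2 ∈ T ∧ q.1 ≠ q.2 ∧ c {q.1, q.2, w} = true := ⟨(a,b), ha, hb, hab, hc⟩
              simp only [dif_pos hex]
              exact mem_product.mpr ⟨hex.choose_spec.1, hex.choose_spec.2.1⟩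
          have hcard : (T ×ˢ T).card < (B \ T).card := by
            rwa [card_product, hTc]
          obtain ⟨w, hw, w', hw', hne, heq⟩ :=
            Finset.exists_ne_map_eq_of_card_lt_of_maps_to hcard hmap
          obtain ⟨hwB, hwT⟩ := mem_sdiff.mp hw
          obtain ⟨hwB', hwT'⟩ := mem_sdiff.mp hw'
          have hex : ∃ q : Fin (n*n) × Fin (n*n),
              q.1 ∈ T ∧ q.2 ∈ T ∧ q.1 ≠ q.2 ∧ c {q.1, q.2, w} = true := by
            obtain ⟨-, hor⟩ := mem_filter.mp hwB
            rcases hor with h | ⟨a, ha, b, hb, hab, hc⟩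
            · exact absurd h hwT
            · exact ⟨(a,b), ha, hb, hab, hc⟩
          have hex' : ∃ q : Fin (n*n) × Fin (n*n),
              q.1 ∈ T ∧ q.2 ∈ T ∧ q.1 ≠ q.2 ∧ c {q.1, q.2, w'} = true := by
            obtain ⟨-, hor⟩ := mem_filter.mp hwB'
            rcases hor with h | ⟨a, ha, b, hb, hab, hc⟩
            · exact absurd h hwT'
            · exact ⟨(a,b), ha, hb, hab, hc⟩
          simp only [dif_pos hex, dif_pos hex'] at heq
          obtain ⟨ha, hb, hab, hc1⟩ := hex.choose_spec
          obtain ⟨ha', hb', hab', hc2⟩ := hex'.choose_spec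
          rw [heq] at hc1 ha hb hab
          set q := hex'.choose
          exact hred q.1 q.2 w w' hne (fun h => hwT (h ▸ ha)) (fun h => hwT (h ▸ hb))
            (fun h => hwT' (h ▸ ha)) (fun h => hwT' (h ▸ hb)) hab hc1 hc2
        have hBcard : B.card < n * n := by
          have h1 : B.card ≤ t + t * t :=
            le_trans (card_le_card hBsub) (by
              calc (T ∪ (B \ T)).card ≤ T.card + (B \ T).card := card_union_le _ _
                _ ≤ t + t * t := by rw [hTc]; exact Nat.add_le_add_left hBT _)
          nlinarith
        obtain ⟨w, hw⟩ : ∃ w, w ∉ B := by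
          by_contra h
          push_neg at h
          have : (univ : Finset (Fin (n*n))).card ≤ B.card :=
            card_le_card (fun a _ => h a)
          rw [card_univ, Fintype.card_fin] at this
          omega
        have hwT : w ∉ T := fun h => hw (mem_filter.mpr ⟨mem_univ _, Or.inl h⟩)
        refine ⟨insert w T, by rw [card_insert_of_notMem hwT, hTc], ?_⟩
        intro s hs h3
        by_cases hws : w ∈ s
        · have hsub : s.erase w ⊆ T := by
            intro a ha
            obtain ⟨haw, has⟩ := mem_erase.mp ha
            rcases mem_insert.mp (hs has) with h | h
            · exact absurd h haw
            · exact h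
          have h2 : (s.erase w).card = 2 := by rw [card_erase_of_mem hws, h3]
          obtain ⟨a, b, hab, hE⟩ := card_eq_two.mp h2
          have ha : a ∈ T := hsub (hE ▸ mem_insert_self a {b})
          have hb : b ∈ T := hsub (hE ▸ mem_insert_of_mem (mem_singleton_self b))
          have hsE : s = {a, b, w} := by
            have := insert_erase hws
            rw [hE] at this
            rw [← this]; ext t; simp; try tauto
          by_contra hc
          rw [Bool.not_eq_false] at hc
          exact hw (mem_filter.mpr ⟨mem_univ _, Or.inr ⟨a, ha, b, hb, hab, hsE ▸ hc⟩⟩)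
        · exact hTb s (fun a ha => by
            rcases mem_insert.mp (hs ha) with h | h
            · exact absurd (h ▸ ha) hws
            · exact h) h3
    obtain ⟨T, hTc, hTb⟩ := key n le_rfl
    refine ⟨fun i => (T.orderIsoOfFin hTc i : Fin (n*n)), ?_, ?_⟩
    · intro a b hab
      exact (T.orderIsoOfFin hTc).injective (Subtype.coe_injective hab)
    · intro e he
      apply hTb
      · intro a ha
        obtain ⟨i, -, rfl⟩ := mem_image.mp ha
        exact (T.orderIsoOfFin hTc i).2
      · rw [card_image_of_injective _ (fun a b hab =>
          (T.orderIsoOfFin hTc).injective (Subtype.coe_injective hab)), he]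




lemma cube_setup (j : ℕ) (hj : 0 < j) (hp : Nat.Prime (3*j+1)) :
    ∃ ω : ZMod (3*j+1), ω^3 = 1 ∧ ω ≠ 1 ∧ ω^2 ≠ 1 ∧ ω ≠ 0 ∧ ω ≠ ω^2 ∧ ω^2 + ω + 1 = 0 := by
  haveI : Fact (Nat.Prime (3*j+1)) := ⟨hp⟩
  haveI : Fact (Nat.Prime 3) := ⟨by norm_num⟩
  have hdvd : 3 ∣ Fintype.card (ZMod (3*j+1))ˣ := by
    rw [ZMod.card_units_eq_totient, Nat.totient_prime hp]
    omega
  obtain ⟨ζ, hζ⟩ := exists_prime_orderOf_dvd_card 3 hdvd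
  set ω : ZMod (3*j+1) := (ζ : ZMod (3*j+1)) with hω
  have h3 : ω^3 = 1 := by
    have := pow_orderOf_eq_one ζ
    rw [hζ] at this
    have h2 := congrArg Units.val this
    push_cast at h2
    exact h2
  have h1 : ω ≠ 1 := by
    intro h
    have : ζ = 1 := Units.ext h
    rw [this, orderOf_one] at hζ; omega
  have h2 : ω^2 ≠ 1 := by
    intro h
    have : ζ^2 = 1 := Units.ext (by push_cast; exact h)
    have := orderOf_dvd_of_pow_eq_one this
    rw [hζ] at this; omega
  have hsum : ω^2 + ω + 1 = 0 := by
    have hfac : (ω-1)*(ω^2+ω+1) = 0 := by linear_combination h3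
    rcases mul_eq_zero.mp hfac with h | h
    · exact absurd (sub_eq_zero.mp h) h1
    · exact h
  have hne : ω ≠ ω^2 := by
    intro h
    have : ω^2 = 1 := by linear_combination ω*h + h3
    exact h2 this
  exact ⟨ω, h3, h1, h2, ζ.ne_zero, hne, hsum⟩

set_option maxHeartbeats 2000000 in
lemma arrow_lower (j : ℕ) (hj : 0 < j) (hp : Nat.Prime (3*j+1)) :
    ¬ Arrow (3*j+1) (2*j+1) := by
  classical
  intro hA
  haveI : Fact (Nat.Prime (3*j+1)) := ⟨hp⟩
  obtain ⟨ω, h3, h1, h2, hω0, hωne, hsum⟩ := cube_setup j hj hp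
  have hj2 : 2 ≤ j := by
    rcases Nat.lt_or_ge j 2 with h | h
    · interval_cases j
      · norm_num at hp
    · exact h
  have h2Z : (2 : ZMod (3*j+1)) ≠ 0 := by
    intro h
    have h' : ((2:ℕ) : ZMod (3*j+1)) = 0 := by exact_mod_cast h
    rw [ZMod.natCast_eq_zero_iff] at h'
    have := Nat.le_of_dvd (by norm_num) h'
    omega
  -- cube roots of unity
  have cube_eq : ∀ u : ZMod (3*j+1), u^3 = 1 → u = 1 ∨ u = ω ∨ u = ω^2 := by
    intro u hu
    have hfac : (u-1)*((u-ω)*(u-ω^2)) = 0 := by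
      linear_combination hu - u^2*hsum + u*hsum + u*h3 - h3
    rcases mul_eq_zero.mp hfac with h | h
    · exact Or.inl (sub_eq_zero.mp h)
    · rcases mul_eq_zero.mp h with h' | h'
      · exact Or.inr (Or.inl (sub_eq_zero.mp h'))
      · exact Or.inr (Or.inr (sub_eq_zero.mp h'))
  have cube_fiber : ∀ x w : ZMod (3*j+1), x ≠ 0 → w^3 = x^3 →
      w = x ∨ w = ω*x ∨ w = ω^2*x := by
    intro x w hx hw
    have hx3 : x^3 ≠ 0 := pow_ne_zero _ hx
    have hu : (w/x)^3 = 1 := by rw [div_pow, hw, div_self hx3]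
    rcases cube_eq _ hu with h | h | h
    · left; rwa [div_eq_one_iff_eq hx] at h
    · right; left; rwa [div_eq_iff hx] at h
    · right; right; rwa [div_eq_iff hx] at h
  -- the red predicate
  set Red : Finset (ZMod (3*j+1)) → Prop := fun s =>
    (∃ x, x ≠ 0 ∧ s = {0, x, -x}) ∨
    (∃ x y z, x ≠ 0 ∧ x ≠ y ∧ x ≠ z ∧ y ≠ z ∧ y^3 = x^3 ∧ z^3 = x^3 ∧ s = {x,y,z})
    with hRedDef
  -- rotation of a cube coset
  have rot : ∀ x a : ZMod (3*j+1), x ≠ 0 → a ∈ ({x, ω*x, ω^2*x} : Finset _) →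
      ({x, ω*x, ω^2*x} : Finset _) = {a, ω*a, ω^2*a} := by
    intro x a hx ha
    simp only [mem_insert, mem_singleton] at ha
    rcases ha with rfl | rfl | rfl
    · rfl
    · have e1 : ω*(ω*x) = ω^2*x := by ring
      have e2 : ω^2*(ω*x) = x := by linear_combination x*h3
      rw [e1, e2]
      ext w; simp only [mem_insert, mem_singleton]; tauto
    · have e1 : ω*(ω^2*x) = x := by linear_combination x*h3
      have e2 : ω^2*(ω^2*x) = ω*x := by linear_combination ω*x*h3
      rw [e1, e2]
      ext w; simp only [mem_insert, mem_singleton]; tauto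
  -- canonical form of a type-B red set
  have redB_canon : ∀ x y z : ZMod (3*j+1), x ≠ 0 → x ≠ y → x ≠ z → y ≠ z →
      y^3 = x^3 → z^3 = x^3 → ({x,y,z} : Finset _) = {x, ω*x, ω^2*x} := by
    intro x y z hx hxy hxz hyz hy3 hz3
    rcases cube_fiber x y hx hy3 with hy | hy | hy
    · exact absurd hy.symm hxy
    all_goals rcases cube_fiber x z hx hz3 with hz | hz | hz
    · exact absurd hz.symm hxz
    · exact absurd (hy.trans hz.symm) hyz
    · rw [hy, hz]
    · exact absurd hz.symm hxz
    · rw [hy, hz]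
      exact congrArg (insert x) (pair_comm _ _)
    · exact absurd (hy.trans hz.symm) hyz
  -- type A / type B sets cannot share two elements
  have keyAB : ∀ x x' y' z' a b : ZMod (3*j+1),
      a ∈ ({0, x, -x} : Finset _) → b ∈ ({0, x, -x} : Finset _) →
      a ∈ ({x',y',z'} : Finset _) → b ∈ ({x',y',z'} : Finset _) → a ≠ b →
      x' ≠ 0 → y'^3 = x'^3 → z'^3 = x'^3 → False := by
    intro x x' y' z' a b haA hbA haB hbB hab hx' hy3 hz3
    have hall : ∀ w ∈ ({x',y',z'} : Finset (ZMod (3*j+1))), w ≠ 0 ∧ w^3 = x'^3 := by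
      intro w hw
      simp only [mem_insert, mem_singleton] at hw
      rcases hw with rfl | rfl | rfl
      · exact ⟨hx', rfl⟩
      · refine ⟨?_, hy3⟩
        intro h
        rw [h] at hy3
        exact hx' (pow_eq_zero_iff (by norm_num : (3:ℕ) ≠ 0) |>.mp
          (by rw [← hy3]; norm_num))
      · refine ⟨?_, hz3⟩
        intro h
        rw [h] at hz3
        exact hx' (pow_eq_zero_iff (by norm_num : (3:ℕ) ≠ 0) |>.mp
          (by rw [← hz3]; norm_num))
    have ha0 : a ≠ 0 := (hall a haB).1
    have hb0 : b ≠ 0 := (hall b hbB).1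
    simp only [mem_insert, mem_singleton] at haA hbA
    have hba : b = -a := by
      rcases haA with rfl | rfl | rfl
      · exact absurd rfl ha0
      · rcases hbA with rfl | rfl | rfl
        · exact absurd rfl hb0
        · exact absurd rfl hab
        · rfl
      · rcases hbA with rfl | rfl | rfl
        · exact absurd rfl hb0
        · exact (neg_neg _).symm
        · exact absurd rfl hab
    have hac := (hall a haB).2
    have hbc := (hall b hbB).2
    rw [hba] at hbc
    have h2a : (2:ZMod (3*j+1)) * a^3 = 0 := by linear_combination hac - hbc
    rcases mul_eq_zero.mp h2a with h | h
    · exact h2Z h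
    · exact ha0 (pow_eq_zero_iff (by norm_num : (3:ℕ) ≠ 0) |>.mp h)
  -- two red sets sharing two elements coincide
  have red_inter : ∀ s s' : Finset (ZMod (3*j+1)), ∀ a b : ZMod (3*j+1),
      Red s → Red s' → a ∈ s → a ∈ s' → b ∈ s → b ∈ s' → a ≠ b → s = s' := by
    intro s s' a b hs hs' has has' hbs hbs' hab
    rcases hs with ⟨x, hx, rfl⟩ | ⟨x, y, z, hx, hxy, hxz, hyz, hy3, hz3, rfl⟩
    · rcases hs' with ⟨x', hx', rfl⟩ | ⟨x', y', z', hx', hxy', hxz', hyz', hy3', hz3', rfl⟩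
      · -- A-A
        obtain ⟨w, hw0, hw1, hw2⟩ : ∃ w : ZMod (3*j+1), w ≠ 0 ∧
            w ∈ ({0,x,-x} : Finset _) ∧ w ∈ ({0,x',-x'} : Finset _) := by
          by_cases ha0 : a = 0
          · exact ⟨b, fun h => hab (ha0.trans h.symm), hbs, hbs'⟩
          · exact ⟨a, ha0, has, has'⟩
        simp only [mem_insert, mem_singleton] at hw1 hw2
        have hx'x : x' = x ∨ x' = -x := by
          rcases hw1 with h1 | h1 | h1
          · exact absurd h1 hw0
          · rcases hw2 with h2 | h2 | h2
            · exact absurd h2 hw0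
            · exact Or.inl (by linear_combination h1 - h2)
            · exact Or.inr (by linear_combination h2 - h1)
          · rcases hw2 with h2 | h2 | h2
            · exact absurd h2 hw0
            · exact Or.inr (by linear_combination h1 - h2)
            · exact Or.inl (by linear_combination h2 - h1)
        rcases hx'x with rfl | rfl
        · rfl
        · ext w'
          simp only [mem_insert, mem_singleton, neg_neg]
          tauto
      · exact (keyAB x x' y' z' a b has hbs has' hbs' hab hx' hy3' hz3').elim
    · rcases hs' with ⟨x', hx', rfl⟩ | ⟨x', y', z', hx', hxy', hxz', hyz', hy3', hz3', rfl⟩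
      · exact (keyAB x' x y z a b has' hbs' has hbs hab hx hy3 hz3).elim
      · -- B-B
        have hcs := redB_canon x y z hx hxy hxz hyz hy3 hz3
        have hcs' := redB_canon x' y' z' hx' hxy' hxz' hyz' hy3' hz3'
        rw [hcs] at has ⊢
        rw [hcs'] at has' ⊢
        rw [rot x a hx has, rot x' a hx' has']
  -- the coloring
  have hcards : Fintype.card (Fin (3*j+1)) = Fintype.card (ZMod (3*j+1)) := by
    rw [Fintype.card_fin, ZMod.card]
  set φ : Fin (3*j+1) ≃ ZMod (3*j+1) := Fintype.equivOfCardEq hcards with hφ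
  set c : Finset (Fin (3*j+1)) → Bool :=
    fun s => if Red (s.map φ.toEmbedding) then true else false with hc
  rcases hA c with ⟨f, hinj, hcol⟩ | ⟨g, hg, hcol⟩
  · -- no red C4
    set F : ℕ → ZMod (3*j+1) := fun k => φ (f k) with hF
    have himg : ∀ e : Finset ℕ, (e.image f).map φ.toEmbedding = e.image F := by
      intro e
      rw [map_eq_image, image_image]
      rfl
    have hFinj : ∀ a b : ℕ, a < 4 → b < 4 → a ≠ b → F a ≠ F b := by
      intro a b ha hb hne h
      exact hne (hinj (by simp [coe_range, Set.mem_Iio]; omega)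
        (by simp [coe_range, Set.mem_Iio]; omega) (φ.injective h))
    have hr1 : Red ({F 0, F 1, F 2} : Finset _) := by
      have h := hcol {0,1,2} (Or.inl rfl)
      rw [hc] at h
      simp only [himg] at h
      have himg2 : (({0,1,2} : Finset ℕ).image F) = {F 0, F 1, F 2} := by
        simp [Finset.image_insert]
      rw [himg2] at h
      by_contra hcon
      rw [if_neg hcon] at h
      exact Bool.false_ne_true h
    have hr2 : Red ({F 1, F 2, F 3} : Finset _) := by
      have h := hcol {1,2,3} (Or.inr rfl)
      rw [hc] at h
      simp only [himg] at h
      have himg2 : (({1,2,3} : Finset ℕ).image F) = {F 1, F 2, F 3} := by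
        simp [Finset.image_insert]
      rw [himg2] at h
      by_contra hcon
      rw [if_neg hcon] at h
      exact Bool.false_ne_true h
    have heq := red_inter _ _ (F 1) (F 2) hr1 hr2 (by simp) (by simp) (by simp) (by simp)
      (hFinj 1 2 (by norm_num) (by norm_num) (by norm_num))
    have hm : F 0 ∈ ({F 1, F 2, F 3} : Finset _) := by
      rw [← heq]; simp
    simp only [mem_insert, mem_singleton] at hm
    rcases hm with h | h | h
    · exact hFinj 0 1 (by norm_num) (by norm_num) (by norm_num) h
    · exact hFinj 0 2 (by norm_num) (by norm_num) (by norm_num) h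
    · exact hFinj 0 3 (by norm_num) (by norm_num) (by norm_num) h
  · -- no blue clique
    set G : Fin (2*j+1) → ZMod (3*j+1) := fun i => φ (g i) with hG
    have hGinj : Function.Injective G := fun a b h => hg (φ.injective h)
    set T : Finset (ZMod (3*j+1)) := univ.image G with hT
    have hTcard : T.card = 2*j+1 := by
      rw [hT, card_image_of_injective _ hGinj, card_univ, Fintype.card_fin]
    have hblue : ∀ s ⊆ T, s.card = 3 → ¬ Red s := by
      intro s hsub h3c hRs
      obtain ⟨x, y, z, hxy, hxz, hyz, rfl⟩ := card_eq_three.mp h3c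
      obtain ⟨i1, -, hi1⟩ := mem_image.mp (hsub (show x ∈ ({x,y,z}:Finset _) by simp))
      obtain ⟨i2, -, hi2⟩ := mem_image.mp (hsub (show y ∈ ({x,y,z}:Finset _) by simp))
      obtain ⟨i3, -, hi3⟩ := mem_image.mp (hsub (show z ∈ ({x,y,z}:Finset _) by simp))
      have hi12 : i1 ≠ i2 := fun h => hxy (by rw [← hi1, ← hi2, h])
      have hi13 : i1 ≠ i3 := fun h => hxz (by rw [← hi1, ← hi3, h])
      have hi23 : i2 ≠ i3 := fun h => hyz (by rw [← hi2, ← hi3, h])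
      have hce := hcol {i1, i2, i3} (card_eq_three.mpr ⟨i1, i2, i3, hi12, hi13, hi23, rfl⟩)
      rw [hc] at hce
      have himg : ((({i1,i2,i3} : Finset (Fin (2*j+1))).image g).map φ.toEmbedding)
          = ({x,y,z} : Finset (ZMod (3*j+1))) := by
        rw [map_eq_image, image_image]
        have : (({i1,i2,i3} : Finset (Fin (2*j+1))).image (φ.toEmbedding ∘ g))
            = ({G i1, G i2, G i3} : Finset (ZMod (3*j+1))) := by
          simp [Finset.image_insert]; rfl
        rw [this, hi1, hi2, hi3]
      simp only [himg] at hce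
      rw [if_pos hRs] at hce
      exact absurd hce (by decide)
    -- now find a red triple inside T
    by_cases h0 : (0 : ZMod (3*j+1)) ∈ T
    · -- a pair {x, -x} must lie in T
      obtain ⟨x, hx, hnx⟩ : ∃ x, x ∈ T.erase 0 ∧ -x ∈ T.erase 0 := by
        by_contra hno
        push_neg at hno
        have hdisj : Disjoint (T.erase 0) ((T.erase 0).image (fun w => -w)) := by
          rw [disjoint_left]
          intro a ha hb
          obtain ⟨b, hbT, hba⟩ := mem_image.mp hb
          exact hno b hbT (by rw [show -b = a from hba]; exact ha)
        have hsub2 : (T.erase 0) ∪ (T.erase 0).image (fun w => -w) ⊆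
            univ.erase (0 : ZMod (3*j+1)) := by
          intro a ha
          rcases mem_union.mp ha with h | h
          · exact mem_erase.mpr ⟨(mem_erase.mp h).1, mem_univ _⟩
          · obtain ⟨b, hbT, hba⟩ := mem_image.mp h
            exact mem_erase.mpr ⟨by rw [← hba]; exact neg_ne_zero.mpr (mem_erase.mp hbT).1,
              mem_univ _⟩
        have hcard := card_le_card hsub2
        rw [card_union_of_disjoint hdisj, card_image_of_injective _ neg_injective,
          card_erase_of_mem h0, hTcard, card_erase_of_mem (mem_univ _), card_univ,
          ZMod.card] at hcard
        omega
      have hx0 : x ≠ 0 := (mem_erase.mp hx).1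
      have hnx0 : -x ≠ 0 := neg_ne_zero.mpr hx0
      have hxnx : x ≠ -x := by
        intro h
        have h2x : (2:ZMod (3*j+1)) * x = 0 := by linear_combination h
        rcases mul_eq_zero.mp h2x with h' | h'
        · exact h2Z h'
        · exact hx0 h'
      refine hblue {0, x, -x} ?_ ?_ (Or.inl ⟨x, hx0, rfl⟩)
      · intro a ha
        simp only [mem_insert, mem_singleton] at ha
        rcases ha with rfl | rfl | rfl
        · exact h0
        · exact mem_of_mem_erase hx
        · exact mem_of_mem_erase hnx
      · exact card_eq_three.mpr ⟨0, x, -x, Ne.symm hx0, Ne.symm hnx0, hxnx, rfl⟩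
    · -- all of T is nonzero; pigeonhole on cubes
      have hTnz : ∀ a ∈ T, a ≠ 0 := fun a ha h => h0 (h ▸ ha)
      set I : Finset (ZMod (3*j+1)) := (univ.erase (0:ZMod (3*j+1))).image (fun w => w^3)
        with hI
      have hmapsto : ∀ a ∈ T, a^3 ∈ I :=
        fun a ha => mem_image.mpr ⟨a, mem_erase.mpr ⟨hTnz a ha, mem_univ _⟩, rfl⟩
      have hfib : ∀ a : ZMod (3*j+1), a ≠ 0 →
          ((univ.erase (0:ZMod (3*j+1))).filter (fun w => w^3 = a^3))
            = {a, ω*a, ω^2*a} := by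
        intro a ha
        ext w
        simp only [mem_filter, mem_erase, mem_univ, true_and, and_true, mem_insert,
          mem_singleton]
        constructor
        · rintro ⟨hw0, hw⟩
          exact cube_fiber a w ha hw
        · rintro (rfl | rfl | rfl)
          · exact ⟨ha, rfl⟩
          · exact ⟨mul_ne_zero hω0 ha, by rw [mul_pow, h3, one_mul]⟩
          · refine ⟨mul_ne_zero (pow_ne_zero 2 hω0) ha, ?_⟩
            rw [mul_pow]
            have : (ω^2)^3 = (ω^3)^2 := by ring
            rw [this, h3, one_pow, one_mul]
      have hfibcard : ∀ a : ZMod (3*j+1), a ≠ 0 →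
          ({a, ω*a, ω^2*a} : Finset (ZMod (3*j+1))).card = 3 := by
        intro a ha
        refine card_eq_three.mpr ⟨a, ω*a, ω^2*a, ?_, ?_, ?_, rfl⟩
        · intro h
          exact h1 (mul_right_cancel₀ ha (by rw [one_mul, ← h])).symm
        · intro h
          exact h2 (mul_right_cancel₀ ha (by rw [one_mul, ← h])).symm
        · intro h
          exact hωne (mul_right_cancel₀ ha h)
      have hIcard : I.card = j := by
        have hs2 := Finset.card_eq_sum_card_image (fun w : ZMod (3*j+1) => w^3)
          (univ.erase (0:ZMod (3*j+1)))
        have h1c : (univ.erase (0:ZMod (3*j+1))).card = 3*j := by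
          rw [card_erase_of_mem (mem_univ _), card_univ, ZMod.card]
          omega
        have hfibs : ∀ b ∈ I, ((univ.erase (0:ZMod (3*j+1))).filter
            (fun w => w^3 = b)).card = 3 := by
          intro b hb
          obtain ⟨a, haE, rfl⟩ := mem_image.mp hb
          have ha0 : a ≠ 0 := (mem_erase.mp haE).1
          rw [hfib a ha0, hfibcard a ha0]
        rw [h1c, Finset.sum_congr rfl hfibs, Finset.sum_const, smul_eq_mul] at hs2
        omega
      obtain ⟨b, hbI, hbcard⟩ := Finset.exists_lt_card_fiber_of_mul_lt_card_of_maps_to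
        (n := 2) hmapsto (by rw [hIcard, hTcard]; omega)
      obtain ⟨s, hssub, hscard⟩ := Finset.exists_subset_card_eq (n := 3) hbcard
      obtain ⟨x, y, z, hxy, hxz, hyz, rfl⟩ := card_eq_three.mp hscard
      have hxf := mem_filter.mp (hssub (show x ∈ ({x,y,z}:Finset _) by simp))
      have hyf := mem_filter.mp (hssub (show y ∈ ({x,y,z}:Finset _) by simp))
      have hzf := mem_filter.mp (hssub (show z ∈ ({x,y,z}:Finset _) by simp))
      refine hblue {x,y,z} (fun a ha => (mem_filter.mp (hssub ha)).1) hscard ?_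
      exact Or.inr ⟨x, y, z, hTnz x hxf.1, hxy, hxz, hyz, by rw [hyf.2, hxf.2],
        by rw [hzf.2, hxf.2], rfl⟩

theorem stmt_19 (j : ℕ) (hj : 0 < j) (hje : Even j) (hp : Nat.Prime (3 * j + 1)) :
    3 * j + 1 < hRamseyOn 3 (Finset.range 4) C4 (2 * j + 1) := by
  have heq : hRamseyOn 3 (Finset.range 4) C4 (2*j+1) = sInf {p | Arrow p (2*j+1)} := rfl
  rw [heq]
  have hne : {p | Arrow p (2*j+1)}.Nonempty :=
    ⟨(2*j+1)*(2*j+1), arrow_upper (2*j+1) (by omega)⟩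
  have hmem : Arrow (sInf {p | Arrow p (2*j+1)}) (2*j+1) := Nat.sInf_mem hne
  by_contra hle
  push_neg at hle
  exact arrow_lower j hj hp (arrow_mono hmem hle)
end
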